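/- arXiv:2604.09476 — 4 statements merged into one kernel-verified Lean document; each statement's English description precedes it below -/
import Mathlib

section
/- Let R be a commutative ring, I ⊂ R an ideal, and f ∈ R a non-zero-divisor in R. Then (f,0) is a non-zero-divisor in the excision algebra R⊕I, and the canonical homomorphism (R⊕I)_{(f,0)} → R_f ⊕ I_f sending (r,i)/(f,0)^n to (r/f^n, i/f^n) is a ring isomorphism onto the excision algebra of R_f with respect to the ideal I_f. -/
open Matrix BigOperators

namespace Paper

/-! ### Linear groups -/

section Linear

variable (n : ℕ) (R : Type*) [CommRing R]

/-- The elementary matrix `e_{ij}(a) = 1 + a·E_{ij}`. -/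
def elemMat (i j : Fin n) (a : R) : Matrix (Fin n) (Fin n) R :=
  1 + Matrix.single i j a

/-- The elementary group `E_n(R)`, as a subgroup of `GL_n(R)`. -/
def E : Subgroup (GL (Fin n) R) :=
  Subgroup.closure
    { g | ∃ i j : Fin n, i ≠ j ∧ ∃ a : R,
        (g : Matrix (Fin n) (Fin n) R) = elemMat n R i j a }

/-- The relative elementary group `E_n(R, I)`:  generated by the conjugates
`ε e_{ij}(a) ε⁻¹` with `ε ∈ E_n(R)`, `a ∈ I`. -/
def Erel (I : Ideal R) : Subgroup (GL (Fin n) R) :=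
  Subgroup.closure
    { g | ∃ ε ∈ E n R, ∃ t : GL (Fin n) R,
        (∃ i j : Fin n, i ≠ j ∧ ∃ a ∈ I,
          (t : Matrix (Fin n) (Fin n) R) = elemMat n R i j a) ∧
        g = ε * t * ε⁻¹ }

/-- `g` is congruent to the identity matrix modulo the ideal `I`, entrywise. -/
def congOne (I : Ideal R) (g : GL (Fin n) R) : Prop :=
  ∀ i j, (g : Matrix (Fin n) (Fin n) R) i j - (1 : Matrix (Fin n) (Fin n) R) i j ∈ I

/-- The relative general linear group `GL_n(R, I)` (kernel of reduction mod `I`). -/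
def GLrel (I : Ideal R) : Set (GL (Fin n) R) := { g | congOne n R I g }

/-- The relative special linear group `SL_n(R, I)`. -/
def SLrel (I : Ideal R) : Set (GL (Fin n) R) :=
  { g | (g : Matrix (Fin n) (Fin n) R).det = 1 ∧ congOne n R I g }

end Linear

/-! ### Symplectic groups -/

section Symplectic

variable (m : ℕ) (R : Type*) [CommRing R]

/-- The standard symplectic form `χ`: block diagonal with blocks `[[0,1],[-1,0]]`
(0-indexed; intended for even `m`). -/
def chiMat : Matrix (Fin m) (Fin m) R :=
  Matrix.of fun i j =>
    if i.val % 2 = 0 ∧ j.val = i.val + 1 then (1 : R)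
    else if j.val % 2 = 0 ∧ i.val = j.val + 1 then -1 else 0

/-- The matrix `σ`: block diagonal with blocks `[[0,1],[1,0]]`. -/
def sigmaMat : Matrix (Fin m) (Fin m) R :=
  Matrix.of fun i j =>
    if (i.val % 2 = 0 ∧ j.val = i.val + 1) ∨ (j.val % 2 = 0 ∧ i.val = j.val + 1)
    then (1 : R) else 0

/-- The permutation `σ` with `σ(2k) = 2k+1`, `σ(2k+1) = 2k` (0-indexed; for even `m`
this is total; out-of-range values are irrelevant). -/
def sigmaPerm (i : Fin m) : Fin m :=
  if h : (if i.val % 2 = 0 then i.val + 1 else i.val - 1) < m then ⟨_, h⟩ else i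

/-- The elementary symplectic matrix `se_{ij}(a)`. -/
def seMat (i j : Fin m) (a : R) : Matrix (Fin m) (Fin m) R :=
  if i = sigmaPerm m j then 1 + Matrix.single i j a
  else 1 + Matrix.single i j a -
    Matrix.single (sigmaPerm m j) (sigmaPerm m i) ((-1 : R) ^ (i.val + j.val) * a)

/-- The elementary symplectic group `ESp_m(R)`. -/
def ESp : Subgroup (GL (Fin m) R) :=
  Subgroup.closure
    { g | ∃ i j : Fin m, i ≠ j ∧ ∃ a : R,
        (g : Matrix (Fin m) (Fin m) R) = seMat m R i j a }

/-- The relative elementary symplectic group `ESp_m(R, I)`. -/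
def ESprel (I : Ideal R) : Subgroup (GL (Fin m) R) :=
  Subgroup.closure
    { g | ∃ ε ∈ ESp m R, ∃ t : GL (Fin m) R,
        (∃ i j : Fin m, i ≠ j ∧ ∃ a ∈ I,
          (t : Matrix (Fin m) (Fin m) R) = seMat m R i j a) ∧
        g = ε * t * ε⁻¹ }

/-- The symplectic group `Sp_m(R)` as a set of invertible matrices. -/
def SpSet : Set (GL (Fin m) R) :=
  { g | (g : Matrix (Fin m) (Fin m) R)ᵀ * chiMat m R * (g : Matrix (Fin m) (Fin m) R) =
      chiMat m R }

/-- The relative symplectic group `Sp_m(R, I)`. -/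
def Sprel (I : Ideal R) : Set (GL (Fin m) R) :=
  { g | g ∈ SpSet m R ∧ congOne m R I g }

/-- The relative symplectic group `Sp_φ(R, I)` with respect to an alternating form `φ`. -/
def SpPhi (I : Ideal R) (φ : Matrix (Fin m) (Fin m) R) : Set (GL (Fin m) R) :=
  { g | congOne m R I g ∧
      (g : Matrix (Fin m) (Fin m) R)ᵀ * φ * (g : Matrix (Fin m) (Fin m) R) = φ }

end Symplectic

/-- The map `GL_n(R) → GL_n(S)` induced by a ring homomorphism `f : R →+* S`. -/
def mapGL {n : ℕ} {R S : Type*} [CommRing R] [CommRing S] (f : R →+* S) :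
    GL (Fin n) R →* GL (Fin n) S :=
  Units.map (RingHom.toMonoidHom (RingHom.mapMatrix f))

/-! ### Regular rings -/

/-- A (Noetherian) regular local ring: the maximal ideal is generated by
`Krull dimension`-many elements. -/
def IsRegularLocal (R : Type*) [CommRing R] : Prop :=
  IsNoetherianRing R ∧ ∃ hl : IsLocalRing R, ∃ s : Finset R,
    Ideal.span (s : Set R) = @IsLocalRing.maximalIdeal R _ hl ∧
      (s.card : WithBot (WithTop ℕ)) = ringKrullDim R

/-- A commutative ring is regular if all its localizations at primes are regular local. -/
def IsRegular (R : Type*) [CommRing R] : Prop :=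
  ∀ (p : Ideal R) (hp : p.IsPrime),
    IsRegularLocal (Localization (@Ideal.primeCompl R _ p hp))

/-! ### Unimodular rows -/

/-- The first standard basis row vector `e₁`. -/
def e1 (n : ℕ) (R : Type*) [CommRing R] : Fin n → R := fun i => if i.val = 0 then 1 else 0

/-- The set `Um_n(R, I)` of unimodular rows congruent to `e₁` mod `I`. -/
def Um (n : ℕ) (R : Type*) [CommRing R] (I : Ideal R) : Set (Fin n → R) :=
  { v | (∃ b : Fin n → R, ∑ i, v i * b i = 1) ∧ ∀ i, v i - e1 n R i ∈ I }

/-- The first row `e₁ · g` of an invertible matrix. -/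
def rowOne {n : ℕ} {R : Type*} [CommRing R] (g : GL (Fin n) R) : Fin n → R :=
  Matrix.vecMul (e1 n R) (g : Matrix (Fin n) (Fin n) R)

/-- `e₁ · G`: the set of first rows of the members of `G`. -/
def firstRows {n : ℕ} {R : Type*} [CommRing R] (G : Set (GL (Fin n) R)) :
    Set (Fin n → R) :=
  { v | ∃ g ∈ G, v = rowOne g }

/-! ### Stabilization of matrices -/

/-- `stab k A = I_k ⊥ A`, the block-diagonal matrix with identity block of size `k`
followed by `A`. -/
def stab {n : ℕ} {R : Type*} [CommRing R] (k : ℕ) (A : Matrix (Fin n) (Fin n) R) :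
    Matrix (Fin (n + k)) (Fin (n + k)) R :=
  Matrix.of fun i j =>
    if hi : i.val < k then (if i.val = j.val then 1 else 0)
    else if hj : j.val < k then 0
    else A ⟨i.val - k, by have := i.isLt; omega⟩ ⟨j.val - k, by have := j.isLt; omega⟩

/-- `stabTo N A = I_{N-n} ⊥ A`, the stabilization of `A` to size `N`. -/
def stabTo {n : ℕ} {R : Type*} [CommRing R] (N : ℕ) (A : Matrix (Fin n) (Fin n) R) :
    Matrix (Fin N) (Fin N) R :=
  Matrix.of fun i j =>
    if hi : i.val < N - n then (if i.val = j.val then 1 else 0)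
    else if hj : j.val < N - n then 0
    else if h2 : i.val - (N - n) < n ∧ j.val - (N - n) < n then
      A ⟨i.val - (N - n), h2.1⟩ ⟨j.val - (N - n), h2.2⟩
    else 0

/-! ### The excision algebra `R ⊕ I` -/

/-- The excision algebra `R ⊕ I`: underlying set `R × I`, with componentwise addition
and multiplication `(r,i)(s,j) = (rs, rj + si + ij)`. -/
structure Excision (R : Type*) [CommRing R] (I : Ideal R) where
  fst : R
  snd : R
  mem : snd ∈ I

namespace Excision

variable {R : Type*} [CommRing R] {I : Ideal R}

theorem ext' {a b : Excision R I} (h1 : a.fst = b.fst) (h2 : a.snd = b.snd) : a = b := by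
  cases a; cases b; simp_all

/-- The injection `R ⊕ I → R × R`, `(r, i) ↦ (r, r + i)`. -/
def toProd (a : Excision R I) : R × R := (a.fst, a.fst + a.snd)

theorem toProd_injective : Function.Injective (toProd (R := R) (I := I)) := by
  intro a b h
  have h1 : a.fst = b.fst := congrArg Prod.fst h
  have h2 : a.fst + a.snd = b.fst + b.snd := congrArg Prod.snd h
  refine ext' h1 ?_
  rw [h1] at h2
  exact add_left_cancel h2

instance : Zero (Excision R I) := ⟨⟨0, 0, I.zero_mem⟩⟩
instance : One (Excision R I) := ⟨⟨1, 0, I.zero_mem⟩⟩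
instance : Add (Excision R I) :=
  ⟨fun a b => ⟨a.fst + b.fst, a.snd + b.snd, I.add_mem a.mem b.mem⟩⟩
instance : Mul (Excision R I) :=
  ⟨fun a b => ⟨a.fst * b.fst, a.fst * b.snd + b.fst * a.snd + a.snd * b.snd,
    I.add_mem (I.add_mem (I.mul_mem_left _ b.mem) (I.mul_mem_left _ a.mem))
      (I.mul_mem_left _ b.mem)⟩⟩
instance : Neg (Excision R I) := ⟨fun a => ⟨-a.fst, -a.snd, I.neg_mem a.mem⟩⟩
instance : Sub (Excision R I) :=
  ⟨fun a b => ⟨a.fst - b.fst, a.snd - b.snd, I.sub_mem a.mem b.mem⟩⟩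
instance : SMul ℕ (Excision R I) :=
  ⟨fun c a => ⟨c • a.fst, c • a.snd, by
    rw [nsmul_eq_mul]; exact I.mul_mem_left _ a.mem⟩⟩
instance : SMul ℤ (Excision R I) :=
  ⟨fun c a => ⟨c • a.fst, c • a.snd, by
    rw [zsmul_eq_mul]; exact I.mul_mem_left _ a.mem⟩⟩
instance : Pow (Excision R I) ℕ := ⟨fun a c => npowRec c a⟩
instance : NatCast (Excision R I) := ⟨fun c => ⟨c, 0, I.zero_mem⟩⟩
instance : IntCast (Excision R I) := ⟨fun c => ⟨c, 0, I.zero_mem⟩⟩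

theorem toProd_mul (a b : Excision R I) : toProd (a * b) = toProd a * toProd b := by
  have h1 : (a * b).fst = a.fst * b.fst := rfl
  have h2 : (a * b).snd = a.fst * b.snd + b.fst * a.snd + a.snd * b.snd := rfl
  unfold toProd
  rw [h1, h2, Prod.mk_mul_mk]
  refine Prod.ext rfl ?_
  ring

instance instCommRing : CommRing (Excision R I) :=
  Function.Injective.commRing toProd toProd_injective
    (Prod.ext rfl (add_zero 0))
    (Prod.ext rfl (add_zero 1))
    (fun a b => Prod.ext rfl (by
      show (a + b).fst + (a + b).snd = (a.fst + a.snd) + (b.fst + b.snd)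
      show (a.fst + b.fst) + (a.snd + b.snd) = (a.fst + a.snd) + (b.fst + b.snd)
      ring))
    toProd_mul
    (fun a => Prod.ext rfl (by
      show (-a).fst + (-a).snd = -(a.fst + a.snd)
      show -a.fst + -a.snd = -(a.fst + a.snd)
      ring))
    (fun a b => Prod.ext rfl (by
      show (a - b).fst + (a - b).snd = (a.fst + a.snd) - (b.fst + b.snd)
      show (a.fst - b.fst) + (a.snd - b.snd) = (a.fst + a.snd) - (b.fst + b.snd)
      ring))
    (fun c a => Prod.ext rfl (by
      show (c • a).fst + (c • a).snd = c • (a.fst + a.snd)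
      show c • a.fst + c • a.snd = c • (a.fst + a.snd)
      rw [smul_add]))
    (fun c a => Prod.ext rfl (by
      show (c • a).fst + (c • a).snd = c • (a.fst + a.snd)
      show c • a.fst + c • a.snd = c • (a.fst + a.snd)
      rw [smul_add]))
    (fun a c => by
      induction c with
      | zero =>
        rw [pow_zero]
        have h0 : (a ^ 0 : Excision R I) = 1 := rfl
        rw [h0]
        exact Prod.ext rfl (add_zero 1)
      | succ c ih =>
        have hs : (a ^ (c + 1) : Excision R I) = a ^ c * a := rfl
        rw [hs, toProd_mul, ih, pow_succ])
    (fun c => Prod.ext rfl (add_zero _))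
    (fun c => Prod.ext rfl (add_zero _))

/-- The projection `R ⊕ I → R`, `(r, i) ↦ r`, as a ring homomorphism. -/
def fstHom (R : Type*) [CommRing R] (I : Ideal R) : Excision R I →+* R where
  toFun := Excision.fst
  map_one' := rfl
  map_mul' _ _ := rfl
  map_zero' := rfl
  map_add' _ _ := rfl

/-- The ring homomorphism `A ⊕ I_A → B ⊕ I_B` induced by `f : A →+* B` mapping
`I_A` into `I_B`. -/
def map {A B : Type*} [CommRing A] [CommRing B] {IA : Ideal A} {IB : Ideal B}
    (f : A →+* B) (hf : ∀ x, x ∈ IA → f x ∈ IB) : Excision A IA →+* Excision B IB where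
  toFun a := ⟨f a.fst, f a.snd, hf _ a.mem⟩
  map_one' := ext' (map_one f) (map_zero f)
  map_mul' a b := ext'
    (by show f (a.fst * b.fst) = f a.fst * f b.fst; rw [_root_.map_mul])
    (by
      show f (a.fst * b.snd + b.fst * a.snd + a.snd * b.snd) =
        f a.fst * f b.snd + f b.fst * f a.snd + f a.snd * f b.snd
      rw [_root_.map_add, _root_.map_add, _root_.map_mul, _root_.map_mul, _root_.map_mul])
  map_zero' := ext' (map_zero f) (map_zero f)
  map_add' a b := ext' (map_add f _ _) (map_add f _ _)

end Excision

/-- The lift `α_L` of a matrix `α ≡ 1 (mod I)` to the excision algebra `R ⊕ I`. -/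
def liftMat {R : Type*} [CommRing R] (I : Ideal R) {n : ℕ}
    (α : Matrix (Fin n) (Fin n) R)
    (h : ∀ i j, α i j - (1 : Matrix (Fin n) (Fin n) R) i j ∈ I) :
    Matrix (Fin n) (Fin n) (Excision R I) :=
  Matrix.of fun i j =>
    ⟨(1 : Matrix (Fin n) (Fin n) R) i j, α i j - (1 : Matrix (Fin n) (Fin n) R) i j, h i j⟩

/-! ### Analytic isomorphisms -/

/-- `φ : B →+* A` is an analytic isomorphism along `h ∈ B`. -/
def IsAnalyticIsoAlong {B A : Type*} [CommRing B] [CommRing A] (φ : B →+* A) (h : B) :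
    Prop :=
  h ∈ nonZeroDivisors B ∧ φ h ∈ nonZeroDivisors A ∧
    Function.Bijective
      (Ideal.quotientMap (Ideal.span {φ h}) φ
        (show Ideal.span {h} ≤ (Ideal.span {φ h}).comap φ from
          Ideal.span_le.mpr (Set.singleton_subset_iff.mpr
            (Ideal.mem_comap.mpr (Ideal.subset_span (Set.mem_singleton _))))))

/-! ### Condition P for real affine algebras -/

/-- A maximal ideal is real if the residue field is isomorphic to `ℝ`. -/
def realMax {A : Type*} [CommRing A] (m : Ideal A) : Prop :=
  m.IsMaximal ∧ Nonempty ((A ⧸ m) ≃+* ℝ)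

/-- Condition **P**: either there is no real maximal ideal,
or the intersection of all real maximal ideals has height at least one
(equivalently, is contained in no minimal prime). -/
def conditionP (A : Type*) [CommRing A] : Prop :=
  (∀ m : Ideal A, ¬ realMax m) ∨
    ∀ p ∈ minimalPrimes A, ¬ (sInf { m : Ideal A | realMax m } ≤ p)

/-! ### Alternating matrices, orthogonal sums and the Pfaffian -/

/-- Block-diagonal (orthogonal) sum of square matrices. -/
def osum {R : Type*} [CommRing R] {a b : ℕ}
    (A : Matrix (Fin a) (Fin a) R) (B : Matrix (Fin b) (Fin b) R) :
    Matrix (Fin (a + b)) (Fin (a + b)) R :=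
  Matrix.of fun i j =>
    if hi : i.val < a then
      (if hj : j.val < a then A ⟨i.val, hi⟩ ⟨j.val, hj⟩ else 0)
    else if hj : j.val < a then 0
    else B ⟨i.val - a, by have := i.isLt; omega⟩ ⟨j.val - a, by have := j.isLt; omega⟩

/-- The set `Alt'_{2n}(R, I)` of invertible alternating matrices congruent to `χ_n`
modulo `I`. -/
def altSet (n : ℕ) (R : Type*) [CommRing R] (I : Ideal R) :
    Set (Matrix (Fin (2 * n)) (Fin (2 * n)) R) :=
  { A | IsUnit A ∧ Aᵀ = -A ∧ (∀ i, A i i = 0) ∧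
      ∀ i j, A i j - chiMat (2 * n) R i j ∈ I }

/-- The Pfaffian of a `2n × 2n` matrix, via expansion along the first row. -/
def pfaffian {R : Type*} [CommRing R] :
    (n : ℕ) → Matrix (Fin (2 * n)) (Fin (2 * n)) R → R
  | 0, _ => 1
  | n + 1, A =>
      ∑ j : Fin (2 * n + 1),
        (-1 : R) ^ (j : ℕ) * A ⟨0, by omega⟩ ⟨j.val + 1, by have := j.isLt; omega⟩ *
          pfaffian n (A.submatrix
            (fun i => ⟨(j.succAbove i).val + 1, by have := (j.succAbove i).isLt; omega⟩)
            (fun i => ⟨(j.succAbove i).val + 1, by have := (j.succAbove i).isLt; omega⟩))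

/-- The set `Alt_{2n}(R, I)` of invertible alternating matrices congruent to `χ_n`
modulo `I` and with Pfaffian `1`. -/
def altSet1 (n : ℕ) (R : Type*) [CommRing R] (I : Ideal R) :
    Set (Matrix (Fin (2 * n)) (Fin (2 * n)) R) :=
  { A | A ∈ altSet n R I ∧ pfaffian n A = 1 }

/-- An even-sized square matrix (a representative for the elementary symplectic
Witt group). -/
structure PreAlt (R : Type*) [CommRing R] where
  n : ℕ
  mat : Matrix (Fin (2 * n)) (Fin (2 * n)) R

/-- Membership in `Alt'_{2n}(R,I)`. -/
def PreAlt.IsMem {R : Type*} [CommRing R] (I : Ideal R) (A : PreAlt R) : Prop :=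
  A.mat ∈ altSet A.n R I

/-- Orthogonal sum of representatives. -/
def PreAlt.osum {R : Type*} [CommRing R] (A B : PreAlt R) : PreAlt R :=
  ⟨A.n + B.n,
    Matrix.reindex (finCongr (show 2 * A.n + 2 * B.n = 2 * (A.n + B.n) by ring))
      (finCongr (show 2 * A.n + 2 * B.n = 2 * (A.n + B.n) by ring))
      (Paper.osum A.mat B.mat)⟩

/-- The representative `χ_n`. -/
def chiE (R : Type*) [CommRing R] (n : ℕ) : PreAlt R := ⟨n, chiMat (2 * n) R⟩

/-- The equivalence relation defining `W'_E(R,I)`:  `A ∼ B` iff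
`A ⊥ χ_{B.n+t} = εᵀ (B ⊥ χ_{A.n+t}) ε` for some `t` and `ε ∈ E_{2(A.n+B.n+t)}(R,I)`. -/
def altRel {R : Type*} [CommRing R] (I : Ideal R) (A B : PreAlt R) : Prop :=
  ∃ t : ℕ, ∃ ε ∈ Erel (2 * (A.n + B.n + t)) R I,
    Matrix.reindex
        (finCongr (show 2 * A.n + 2 * (B.n + t) = 2 * (A.n + B.n + t) by ring))
        (finCongr (show 2 * A.n + 2 * (B.n + t) = 2 * (A.n + B.n + t) by ring))
        (Paper.osum A.mat (chiMat (2 * (B.n + t)) R)) =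
      (ε : Matrix (Fin (2 * (A.n + B.n + t))) (Fin (2 * (A.n + B.n + t))) R)ᵀ *
        (Matrix.reindex
          (finCongr (show 2 * B.n + 2 * (A.n + t) = 2 * (A.n + B.n + t) by ring))
          (finCongr (show 2 * B.n + 2 * (A.n + t) = 2 * (A.n + B.n + t) by ring))
          (Paper.osum B.mat (chiMat (2 * (A.n + t)) R))) *
        (ε : Matrix (Fin (2 * (A.n + B.n + t))) (Fin (2 * (A.n + B.n + t))) R)

end Paper

open Paper

theorem mk_mem_ideal_map {R : Type*} [CommRing R] (I : Ideal R) (f : R) (i : R)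
    (hi : i ∈ I) (d : Submonoid.powers f) :
    Localization.mk i d ∈ I.map (algebraMap R (Localization.Away f)) := by
  have h : Localization.mk i d = Localization.mk i 1 * Localization.mk 1 d := by
    rw [Localization.mk_mul, mul_one, one_mul]
  rw [h, Localization.mk_one_eq_algebraMap]
  exact Ideal.mul_mem_right _ _ (Ideal.mem_map_of_mem _ hi)

section Statement7Aux

variable {R : Type*} [CommRing R] {I : Ideal R}

theorem Excision.mul_fst (a b : Excision R I) : (a * b).fst = a.fst * b.fst := rfl

theorem Excision.mul_snd (a b : Excision R I) :
    (a * b).snd = a.fst * b.snd + b.fst * a.snd + a.snd * b.snd := rfl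

theorem Excision.pow_fz (f : R) (c : ℕ) :
    ((⟨f, 0, I.zero_mem⟩ : Excision R I)) ^ c = ⟨f ^ c, 0, I.zero_mem⟩ := by
  induction c with
  | zero => exact Excision.ext' (pow_zero f).symm rfl
  | succ c ih =>
    rw [pow_succ, ih]
    refine Excision.ext' ?_ ?_
    · show f ^ c * f = f ^ (c + 1); rw [pow_succ]
    · show f ^ c * 0 + f * 0 + 0 * 0 = 0; ring

/-- The element `f ^ n` of the submonoid of powers of `f`. -/
def pw (f : R) (n : ℕ) : Submonoid.powers f := ⟨f ^ n, n, rfl⟩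

theorem mk_pw_self (f : R) (m : ℕ) :
    Localization.mk (f ^ m) (pw f m) = 1 := by
  have : Localization.mk (↑(pw f m)) (pw f m) = 1 := Localization.mk_self (pw f m)
  exact this

/-- In the localization away from `f`, combining exponents in `mk`. -/
theorem mk_mul_pow_cancel (f : R) (a : R) (n m : ℕ) :
    Localization.mk (a * f ^ m) (pw f (n + m)) = Localization.mk a (pw f n) := by
  have hd : pw f (n + m) = pw f n * pw f m := Subtype.ext (pow_add f n m)
  rw [hd, ← Localization.mk_mul, mk_pw_self, mul_one]

end Statement7Aux

/-- Let `f ∈ R` be a non-zero-divisor and `I ⊆ R` an ideal.  Then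
`(f,0)` is a non-zero-divisor in the excision algebra `R⊕I`, and the canonical map
`(R⊕I)_{(f,0)} → R_f ⊕ I_f`, `(r,i)/(f,0)ⁿ ↦ (r/fⁿ, i/fⁿ)`, is a ring isomorphism. -/
theorem statement7 (R : Type*) [CommRing R] (I : Ideal R) (f : R)
    (hf : f ∈ nonZeroDivisors R) :
    (⟨f, 0, I.zero_mem⟩ : Excision R I) ∈ nonZeroDivisors (Excision R I) ∧
    ∃ ψ : Localization.Away (⟨f, 0, I.zero_mem⟩ : Excision R I) ≃+*
        Excision (Localization.Away f) (I.map (algebraMap R (Localization.Away f))),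
      ∀ (r i : R) (hi : i ∈ I) (c : ℕ),
        ψ (Localization.mk ⟨r, i, hi⟩
            ⟨(⟨f, 0, I.zero_mem⟩ : Excision R I) ^ c, c, rfl⟩) =
          ⟨Localization.mk r ⟨f ^ c, c, rfl⟩, Localization.mk i ⟨f ^ c, c, rfl⟩,
            mk_mem_ideal_map I f i hi _⟩ := by
  classical
  constructor
  · rw [mem_nonZeroDivisors_iff_right]
    intro x hx
    have h1 : x.fst * f = 0 := congrArg Excision.fst hx
    have h2 : x.fst * 0 + f * x.snd + x.snd * 0 = 0 := congrArg Excision.snd hx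
    have hxf : x.fst = 0 := mem_nonZeroDivisors_iff_right.mp hf _ h1
    have h2' : x.snd * f = 0 := by
      rw [mul_zero, mul_zero, zero_add, add_zero] at h2
      rw [mul_comm]; exact h2
    exact Excision.ext' hxf (mem_nonZeroDivisors_iff_right.mp hf _ h2')
  · have halg : ∀ a : R, (algebraMap R (Localization.Away f)) a = Localization.mk a 1 :=
      fun a => (Localization.mk_one_eq_algebraMap a).symm
    have hmul1 : ∀ (a : R) (d : Submonoid.powers f),
        algebraMap R (Localization.Away f) a * Localization.mk 1 d = Localization.mk a d := by
      intro a d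
      rw [halg, Localization.mk_mul, mul_one, one_mul]
    set φ : Excision R I →+*
        Excision (Localization.Away f) (I.map (algebraMap R (Localization.Away f))) :=
      Excision.map (algebraMap R (Localization.Away f))
        (fun x hx => Ideal.mem_map_of_mem _ hx) with hφ
    set v : Excision (Localization.Away f) (I.map (algebraMap R (Localization.Away f))) :=
      ⟨Localization.mk 1 (pw f 1), 0, Ideal.zero_mem _⟩ with hvdef
    have hv : φ ⟨f, 0, I.zero_mem⟩ * v = 1 := by
      refine Excision.ext' ?_ ?_
      · show algebraMap R (Localization.Away f) f * Localization.mk 1 (pw f 1) = 1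
        rw [hmul1]
        have h := mk_pw_self f 1
        rwa [pow_one] at h
      · show algebraMap R (Localization.Away f) f * 0 +
          Localization.mk 1 (pw f 1) * algebraMap R (Localization.Away f) 0 +
          algebraMap R (Localization.Away f) 0 * 0 = 0
        simp
    set ψ0 : Localization.Away (⟨f, 0, I.zero_mem⟩ : Excision R I) →+*
        Excision (Localization.Away f) (I.map (algebraMap R (Localization.Away f))) :=
      Localization.awayLift φ _ (isUnit_iff_exists_inv.mpr ⟨v, hv⟩) with hψ0
    have hvpow : ∀ c : ℕ,
        v ^ c = ⟨Localization.mk 1 (pw f c), 0, Ideal.zero_mem _⟩ := by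
      intro c
      induction c with
      | zero =>
        rw [pow_zero]
        refine Eq.symm (Excision.ext' ?_ ?_)
        · show Localization.mk 1 (pw f 0) = 1
          have h := mk_pw_self f 0
          rwa [pow_zero] at h
        · rfl
      | succ c ih =>
        rw [pow_succ, ih]
        refine Excision.ext' ?_ ?_
        · show Localization.mk 1 (pw f c) * Localization.mk 1 (pw f 1) =
            Localization.mk 1 (pw f (c + 1))
          rw [Localization.mk_mul, one_mul]
          congr 1
          exact Subtype.ext (by rw [pow_one, pow_succ] : f ^ c * f ^ 1 = f ^ (c + 1))
        · show Localization.mk 1 (pw f c) * 0 + Localization.mk 1 (pw f 1) * 0 + 0 * 0 = 0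
          ring
    have key : ∀ (r i : R) (hi : i ∈ I) (c : ℕ),
        ψ0 (Localization.mk ⟨r, i, hi⟩
            ⟨(⟨f, 0, I.zero_mem⟩ : Excision R I) ^ c, c, rfl⟩) =
          ⟨Localization.mk r ⟨f ^ c, c, rfl⟩, Localization.mk i ⟨f ^ c, c, rfl⟩,
            mk_mem_ideal_map I f i hi _⟩ := by
      intro r i hi c
      rw [hψ0, Localization.awayLift_mk φ _ _ _ hv c, hvpow c]
      refine Excision.ext' ?_ ?_
      · show algebraMap R (Localization.Away f) r * Localization.mk 1 (pw f c) =
          Localization.mk r (pw f c)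
        rw [hmul1]
      · show algebraMap R (Localization.Away f) r * 0 +
          Localization.mk 1 (pw f c) * algebraMap R (Localization.Away f) i +
          algebraMap R (Localization.Away f) i * 0 = Localization.mk i (pw f c)
        rw [mul_zero, mul_zero, zero_add, add_zero, mul_comm, hmul1]
    have hinj : Function.Injective ψ0 := by
      rw [injective_iff_map_eq_zero]
      intro z
      refine Localization.induction_on z ?_
      rintro ⟨a, s⟩ hz
      obtain ⟨n, hn⟩ := s.2
      have hs : s = ⟨(⟨f, 0, I.zero_mem⟩ : Excision R I) ^ n, n, rfl⟩ := Subtype.ext hn.symm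
      rw [hs] at hz
      have hz' : ψ0 (Localization.mk ⟨a.fst, a.snd, a.mem⟩
          ⟨(⟨f, 0, I.zero_mem⟩ : Excision R I) ^ n, n, rfl⟩) = 0 := hz
      rw [key a.fst a.snd a.mem n] at hz'
      have hz0 : ∀ x : R, Localization.mk x (pw f n) = 0 → x = 0 := by
        intro x hx
        rw [Localization.mk_eq_mk', IsLocalization.mk'_eq_zero_iff] at hx
        obtain ⟨m, hm⟩ := hx
        obtain ⟨k, hk⟩ := m.2
        have hk' : f ^ k = (m : R) := hk
        have hx0 : x * f ^ k = 0 := by rw [hk', mul_comm]; exact hm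
        exact mem_nonZeroDivisors_iff_right.mp (pow_mem hf k) x hx0
      have h1 : a.fst = 0 := hz0 _ (congrArg Excision.fst hz')
      have h2 : a.snd = 0 := hz0 _ (congrArg Excision.snd hz')
      have ha : a = 0 := Excision.ext' h1 h2
      rw [ha]
      exact Localization.mk_zero s
    have hsurj : Function.Surjective ψ0 := by
      intro b
      obtain ⟨⟨r, s⟩, hx⟩ := Localization.induction_on
        (p := fun z => ∃ y : R × Submonoid.powers f, Localization.mk y.1 y.2 = z)
        b.fst (fun y => ⟨y, rfl⟩)
      obtain ⟨n, hn⟩ := s.2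
      have hxr : Localization.mk r (pw f n) = b.fst := by
        rw [show pw f n = s from Subtype.ext hn]; exact hx
      have hb := b.mem
      rw [IsLocalization.mem_map_algebraMap_iff (Submonoid.powers f)
        (Localization.Away f)] at hb
      obtain ⟨⟨⟨i, hiI⟩, s2⟩, hyi⟩ := hb
      obtain ⟨m, hm⟩ := s2.2
      have hu2 : algebraMap R (Localization.Away f) (s2 : R) *
          Localization.mk 1 (pw f m) = 1 := by
        rw [hmul1, show ((s2 : R)) = f ^ m from hm.symm]
        exact mk_pw_self f m
      have hyb : b.snd = Localization.mk i (pw f m) := by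
        calc b.snd = b.snd * (algebraMap R (Localization.Away f) (s2 : R) *
              Localization.mk 1 (pw f m)) := by rw [hu2, mul_one]
          _ = (b.snd * algebraMap R (Localization.Away f) (s2 : R)) *
              Localization.mk 1 (pw f m) := by ring
          _ = algebraMap R (Localization.Away f) i * Localization.mk 1 (pw f m) := by
              rw [hyi]
          _ = Localization.mk i (pw f m) := hmul1 i (pw f m)
      refine ⟨Localization.mk ⟨r * f ^ m, i * f ^ n, I.mul_mem_right _ hiI⟩
        ⟨(⟨f, 0, I.zero_mem⟩ : Excision R I) ^ (n + m), n + m, rfl⟩, ?_⟩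
      rw [key]
      refine Excision.ext' ?_ ?_
      · show Localization.mk (r * f ^ m) (pw f (n + m)) = b.fst
        rw [mk_mul_pow_cancel, hxr]
      · show Localization.mk (i * f ^ n) (pw f (n + m)) = b.snd
        rw [show pw f (n + m) = pw f (m + n) from Subtype.ext (by rw [add_comm]),
          mk_mul_pow_cancel]
        exact hyb.symm
    refine ⟨RingEquiv.ofBijective ψ0 ⟨hinj, hsurj⟩, ?_⟩
    intro r i hi c
    exact key r i hi c
end

section
/- Let R be a commutative ring and n ∈ ℕ. (1) Linear case, n ≥ 2: if Um_n(R, ⟨a⟩) = e_1 · SL_n(R, ⟨a⟩) for every principal ideal ⟨a⟩ ⊂ R, then Um_n(R, I) = e_1 · SL_n(R, I) for every ideal I ⊂ R. (2) Symplectic case, n = 2m ≥ 4: if Um_{2m}(R, ⟨a⟩) = e_1 · Sp_{2m}(R, ⟨a⟩) for every principal ideal ⟨a⟩ ⊂ R, then Um_{2m}(R, I) = e_1 · Sp_{2m}(R, I) for every ideal I ⊂ R. -/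
open Matrix BigOperators

open Paper

namespace S9

variable {R : Type*} [CommRing R]

/-- matrix-level congruence to 1 mod I -/
def MC {n : ℕ} (I : Ideal R) (A : Matrix (Fin n) (Fin n) R) : Prop :=
  ∀ i j, A i j - (1 : Matrix (Fin n) (Fin n) R) i j ∈ I

lemma MC_mul {n : ℕ} {I : Ideal R} {A B : Matrix (Fin n) (Fin n) R}
    (hA : MC I A) (hB : MC I B) : MC I (A * B) := by
  intro i j
  have h : A * B - 1 = (A - 1) * B + (B - 1) := by noncomm_ring
  have h2 : (A * B) i j - (1 : Matrix (Fin n) (Fin n) R) i j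
      = ((A - 1) * B) i j + ((B - 1) i j) := by
    have := congrFun (congrFun h i) j
    simpa [Matrix.sub_apply, Matrix.add_apply] using this
  rw [h2]
  refine I.add_mem ?_ ?_
  · rw [Matrix.mul_apply]
    refine Ideal.sum_mem _ fun l _ => ?_
    exact Ideal.mul_mem_right _ _ (by simpa [Matrix.sub_apply] using hA i l)
  · simpa [Matrix.sub_apply] using hB i j

lemma MC_mono {n : ℕ} {I J : Ideal R} (hIJ : I ≤ J) {A : Matrix (Fin n) (Fin n) R}
    (hA : MC I A) : MC J A := fun i j => hIJ (hA i j)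

lemma e1_apply_eq {n : ℕ} (hn : 0 < n) (i : Fin n) :
    e1 n R i = (1 : Matrix (Fin n) (Fin n) R) (⟨0, hn⟩ : Fin n) i := by
  rw [Matrix.one_apply, e1]
  by_cases h : i.val = 0
  · rw [if_pos h, if_pos (Fin.ext h.symm)]
  · rw [if_neg h, if_neg fun hh => h (congrArg Fin.val hh).symm]

lemma vecMul_e1 {n : ℕ} (hn : 0 < n) (M : Matrix (Fin n) (Fin n) R) :
    Matrix.vecMul (e1 n R) M = fun k => M ⟨0, hn⟩ k := by
  funext k
  rw [Matrix.vecMul]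
  show ∑ i, e1 n R i * M i k = _
  rw [Finset.sum_eq_single (⟨0, hn⟩ : Fin n)]
  · simp [e1]
  · intro i _ hne
    have : i.val ≠ 0 := fun h => hne (Fin.ext h)
    simp [e1, this]
  · simp

/-- easy direction: first rows of congruent-to-1 invertible matrices are in `Um`. -/
lemma firstRows_sub_Um {n : ℕ} (hn : 0 < n) (I : Ideal R) (G : Set (GL (Fin n) R))
    (hG : ∀ g ∈ G, congOne n R I g) : firstRows G ⊆ Um n R I := by
  rintro v ⟨g, hg, rfl⟩
  have hrow : rowOne g = fun k => (g : Matrix (Fin n) (Fin n) R) ⟨0, hn⟩ k :=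
    vecMul_e1 hn _
  constructor
  · refine ⟨fun i => ((g⁻¹ : GL (Fin n) R) : Matrix (Fin n) (Fin n) R) i ⟨0, hn⟩, ?_⟩
    have : ∑ i, rowOne g i * ((g⁻¹ : GL (Fin n) R) : Matrix (Fin n) (Fin n) R) i ⟨0, hn⟩
        = ((g : Matrix (Fin n) (Fin n) R) *
            ((g⁻¹ : GL (Fin n) R) : Matrix (Fin n) (Fin n) R)) ⟨0, hn⟩ ⟨0, hn⟩ := by
      rw [Matrix.mul_apply, hrow]
    rw [this]
    have hone : (g : Matrix (Fin n) (Fin n) R) *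
        ((g⁻¹ : GL (Fin n) R) : Matrix (Fin n) (Fin n) R) = 1 := by
      rw [← Units.val_mul, mul_inv_cancel, Units.val_one]
    rw [hone, Matrix.one_apply_eq]
  · intro i
    rw [hrow, e1_apply_eq hn]
    exact hG g hg ⟨0, hn⟩ i

/-- transfer unimodularity through an invertible matrix -/
lemma vecMul_unimodular {n : ℕ} {v : Fin n → R} {b : Fin n → R}
    (hb : ∑ i, v i * b i = 1) (g : GL (Fin n) R) :
    ∃ b' : Fin n → R, ∑ i, Matrix.vecMul v (g : Matrix (Fin n) (Fin n) R) i * b' i = 1 := by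
  refine ⟨Matrix.mulVec ((g⁻¹ : GL (Fin n) R) : Matrix (Fin n) (Fin n) R) b, ?_⟩
  show dotProduct _ _ = 1
  rw [dotProduct_mulVec, Matrix.vecMul_vecMul, ← Units.val_mul, mul_inv_cancel,
    Units.val_one, Matrix.vecMul_one]
  exact hb

end S9
namespace S9

variable {R : Type*} [CommRing R]

lemma sigma_val {n : ℕ} (hn2 : n % 2 = 0) (i : Fin n) :
    (sigmaPerm n i).val = if i.val % 2 = 0 then i.val + 1 else i.val - 1 := by
  have hlt : (if i.val % 2 = 0 then i.val + 1 else i.val - 1) < n := by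
    have := i.isLt
    by_cases h : i.val % 2 = 0
    · rw [if_pos h]; omega
    · rw [if_neg h]; omega
  rw [sigmaPerm, dif_pos hlt]

lemma sigma_val_even {n : ℕ} (hn2 : n % 2 = 0) (i : Fin n) (h : i.val % 2 = 0) :
    (sigmaPerm n i).val = i.val + 1 := by rw [sigma_val hn2, if_pos h]

lemma sigma_val_odd {n : ℕ} (hn2 : n % 2 = 0) (i : Fin n) (h : ¬ i.val % 2 = 0) :
    (sigmaPerm n i).val = i.val - 1 := by rw [sigma_val hn2, if_neg h]

lemma sigma_sigma {n : ℕ} (hn2 : n % 2 = 0) (i : Fin n) :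
    sigmaPerm n (sigmaPerm n i) = i := by
  apply Fin.ext
  by_cases h : i.val % 2 = 0
  · have e1 := sigma_val_even hn2 i h
    have e2 := sigma_val_odd hn2 (sigmaPerm n i) (by omega)
    omega
  · have e1 := sigma_val_odd hn2 i h
    have e2 := sigma_val_even hn2 (sigmaPerm n i) (by omega)
    omega

lemma sigma_ne {n : ℕ} (hn2 : n % 2 = 0) (i : Fin n) : sigmaPerm n i ≠ i := by
  intro hh
  have := congrArg Fin.val hh
  by_cases h : i.val % 2 = 0
  · have e1 := sigma_val_even hn2 i h; omega
  · have e1 := sigma_val_odd hn2 i h; omega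

lemma sigma_two_le {n : ℕ} (hn2 : n % 2 = 0) (i : Fin n) (h : 2 ≤ i.val) :
    2 ≤ (sigmaPerm n i).val := by
  by_cases hp : i.val % 2 = 0
  · have e1 := sigma_val_even hn2 i hp; omega
  · have e1 := sigma_val_odd hn2 i hp; omega

lemma neg_one_pow_sigma {n : ℕ} (hn2 : n % 2 = 0) (i : Fin n) :
    ((-1 : R)) ^ (sigmaPerm n i).val = -(-1 : R) ^ i.val := by
  by_cases h : i.val % 2 = 0
  · rw [sigma_val_even hn2 i h, pow_succ]; ring
  · have e := sigma_val_odd hn2 i h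
    have hi : i.val = (i.val - 1) + 1 := by omega
    rw [e]
    conv_rhs => rw [hi]
    rw [pow_succ]; ring

lemma chi_apply {n : ℕ} (hn2 : n % 2 = 0) (i k : Fin n) :
    chiMat n R i k = if k = sigmaPerm n i then ((-1 : R)) ^ i.val else 0 := by
  rw [chiMat]
  simp only [Matrix.of_apply]
  by_cases h : i.val % 2 = 0
  · have e := sigma_val_even hn2 i h
    by_cases hk : k = sigmaPerm n i
    · have hkv : k.val = i.val + 1 := by rw [hk]; exact e
      rw [if_pos ⟨h, hkv⟩, if_pos hk, Even.neg_one_pow (Nat.even_iff.mpr h)]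
    · have c1 : ¬(i.val % 2 = 0 ∧ k.val = i.val + 1) := by
        rintro ⟨-, hh⟩; exact hk (Fin.ext (by omega))
      have c2 : ¬(k.val % 2 = 0 ∧ i.val = k.val + 1) := by rintro ⟨h1, h2⟩; omega
      rw [if_neg c1, if_neg c2, if_neg hk]
  · have e := sigma_val_odd hn2 i h
    by_cases hk : k = sigmaPerm n i
    · have hkv : k.val = i.val - 1 := by rw [hk]; exact e
      have c1 : ¬(i.val % 2 = 0 ∧ k.val = i.val + 1) := by rintro ⟨h1, -⟩; omega
      rw [if_neg c1, if_pos ⟨by omega, by omega⟩, if_pos hk,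
        Odd.neg_one_pow (Nat.odd_iff.mpr (by omega))]
    · have c1 : ¬(i.val % 2 = 0 ∧ k.val = i.val + 1) := by rintro ⟨h1, -⟩; omega
      have c2 : ¬(k.val % 2 = 0 ∧ i.val = k.val + 1) := by
        rintro ⟨h1, h2⟩; exact hk (Fin.ext (by omega))
      rw [if_neg c1, if_neg c2, if_neg hk]

lemma chi_mul_apply {n : ℕ} (hn2 : n % 2 = 0) (M : Matrix (Fin n) (Fin n) R) (i k : Fin n) :
    (chiMat n R * M) i k = ((-1 : R)) ^ i.val * M (sigmaPerm n i) k := by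
  rw [Matrix.mul_apply]
  rw [Finset.sum_congr rfl fun l _ => by rw [chi_apply hn2, ite_mul, zero_mul]]
  rw [Finset.sum_ite_eq' Finset.univ (sigmaPerm n i)
    (fun l => ((-1 : R)) ^ i.val * M l k), if_pos (Finset.mem_univ _)]

lemma chi_transpose {n : ℕ} (hn2 : n % 2 = 0) :
    (chiMat n R)ᵀ = -(chiMat n R) := by
  ext i k
  rw [Matrix.transpose_apply, Matrix.neg_apply, chi_apply hn2, chi_apply hn2]
  by_cases h : k = sigmaPerm n i
  · have h' : i = sigmaPerm n k := by rw [h, sigma_sigma hn2]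
    rw [if_pos h', if_pos h, h, neg_one_pow_sigma hn2]
  · have h' : ¬ i = sigmaPerm n k := by
      intro hh; exact h (by rw [hh, sigma_sigma hn2])
    rw [if_neg h', if_neg h, neg_zero]

lemma pairsum {n : ℕ} (hn2 : n % 2 = 0) (v : Fin n → R) :
    ∑ l : Fin n, (if 2 ≤ l.val then ((-1 : R)) ^ l.val * (v l * v (sigmaPerm n l)) else 0)
      = 0 := by
  apply Finset.sum_involution (g := fun l _ => sigmaPerm n l)
  · intro l _
    by_cases hl : 2 ≤ l.val
    · have h2 : 2 ≤ (sigmaPerm n l).val := sigma_two_le hn2 l hl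
      rw [if_pos hl, if_pos h2, sigma_sigma hn2, neg_one_pow_sigma hn2]
      ring
    · have h2 : ¬ 2 ≤ (sigmaPerm n l).val := by
        intro hh
        have := sigma_two_le hn2 _ hh
        rw [sigma_sigma hn2] at this
        exact hl this
      rw [if_neg hl, if_neg h2, add_zero]
  · intro l _ _; exact sigma_ne hn2 l
  · intro l _; exact Finset.mem_univ _
  · intro l _; exact sigma_sigma hn2 l

lemma mat_symp_mul {n : ℕ} {C A B : Matrix (Fin n) (Fin n) R}
    (hA : Aᵀ * C * A = C) (hB : Bᵀ * C * B = C) : (A * B)ᵀ * C * (A * B) = C := by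
  rw [Matrix.transpose_mul]
  have h : Bᵀ * Aᵀ * C * (A * B) = Bᵀ * (Aᵀ * C * A) * B := by noncomm_ring
  rw [h, hA, hB]

lemma mat_symp_inv {n : ℕ} {C : Matrix (Fin n) (Fin n) R} (g : GL (Fin n) R)
    (hA : ((g : Matrix (Fin n) (Fin n) R))ᵀ * C * (g : Matrix (Fin n) (Fin n) R) = C) :
    (((g⁻¹ : GL (Fin n) R) : Matrix (Fin n) (Fin n) R))ᵀ * C *
      ((g⁻¹ : GL (Fin n) R) : Matrix (Fin n) (Fin n) R) = C := by
  have h1 : (g : Matrix (Fin n) (Fin n) R) *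
      ((g⁻¹ : GL (Fin n) R) : Matrix (Fin n) (Fin n) R) = 1 := by
    rw [← Units.val_mul, mul_inv_cancel, Units.val_one]
  calc (((g⁻¹ : GL (Fin n) R) : Matrix (Fin n) (Fin n) R))ᵀ * C *
        ((g⁻¹ : GL (Fin n) R) : Matrix (Fin n) (Fin n) R)
      = (((g⁻¹ : GL (Fin n) R) : Matrix (Fin n) (Fin n) R))ᵀ *
          (((g : Matrix (Fin n) (Fin n) R))ᵀ * C * (g : Matrix (Fin n) (Fin n) R)) *
          ((g⁻¹ : GL (Fin n) R) : Matrix (Fin n) (Fin n) R) := by rw [hA]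
    _ = ((g : Matrix (Fin n) (Fin n) R) *
          ((g⁻¹ : GL (Fin n) R) : Matrix (Fin n) (Fin n) R))ᵀ * C *
          ((g : Matrix (Fin n) (Fin n) R) *
          ((g⁻¹ : GL (Fin n) R) : Matrix (Fin n) (Fin n) R)) := by
        rw [Matrix.transpose_mul]; noncomm_ring
    _ = C := by rw [h1, Matrix.transpose_one, Matrix.one_mul, Matrix.mul_one]

lemma symp_of {n : ℕ} (hn2 : n % 2 = 0) {N S : Matrix (Fin n) (Fin n) R}
    (h1 : chiMat n R * N = S) (h2 : Sᵀ = S) (h3 : S * N = 0) :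
    (1 + N)ᵀ * chiMat n R * (1 + N) = chiMat n R := by
  have hNt : Nᵀ * chiMat n R = -S := by
    have h4 := congrArg Matrix.transpose h1
    rw [Matrix.transpose_mul, chi_transpose hn2, Matrix.mul_neg, h2] at h4
    exact (neg_eq_iff_eq_neg.mp h4)
  have expand : (1 + N)ᵀ * chiMat n R * (1 + N)
      = chiMat n R + chiMat n R * N + Nᵀ * chiMat n R + Nᵀ * chiMat n R * N := by
    rw [Matrix.transpose_add, Matrix.transpose_one]; noncomm_ring
  rw [expand, h1, hNt, Matrix.neg_mul, h3, neg_zero, add_zero, add_neg_cancel_right]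

end S9
namespace S9

variable {R : Type*} [CommRing R]

lemma linear_forward {n : ℕ} (hn : 2 ≤ n)
    (hyp : ∀ a : R, Um n R (Ideal.span {a}) = firstRows (SLrel n R (Ideal.span {a})))
    (I : Ideal R) : Um n R I ⊆ firstRows (SLrel n R I) := by
  have hn0 : 0 < n := by omega
  set z0 : Fin n := ⟨0, hn0⟩ with hz0
  rintro v ⟨⟨b, hb⟩, hv⟩
  -- entries off 0 are in I, and a := v z0 - 1 ∈ I
  have hvI : ∀ i : Fin n, i ≠ z0 → v i ∈ I := by
    intro i hi
    have h0 : i.val ≠ 0 := fun h => hi (Fin.ext h)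
    simpa [e1, h0] using hv i
  set a : R := v z0 - 1 with ha
  have haI : a ∈ I := by simpa [e1, ha, hz0] using hv z0
  have haspan : Ideal.span {a} ≤ I := by
    rw [Ideal.span_le, Set.singleton_subset_iff]; exact haI
  -- the clearing matrix
  set N : Matrix (Fin n) (Fin n) R :=
    Matrix.of fun i k => if i = z0 ∧ k ≠ z0 then -(v k) else 0 with hN
  have hNN : N * N = 0 := by
    ext i k
    rw [Matrix.mul_apply]
    refine Finset.sum_eq_zero fun l _ => ?_
    by_cases hl : l = z0 <;> simp [hN, hl]
  have hG1 : (1 + N) * (1 - N) = 1 := by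
    have h : (1 + N) * (1 - N) = 1 - N * N := by noncomm_ring
    rw [h, hNN, sub_zero]
  have hG2 : (1 - N) * (1 + N) = 1 := by
    have h : (1 - N) * (1 + N) = 1 - N * N := by noncomm_ring
    rw [h, hNN, sub_zero]
  set gU : GL (Fin n) R := ⟨1 + N, 1 - N, hG1, hG2⟩ with hgU
  -- the transformed row
  set w : Fin n → R := Matrix.vecMul v (1 + N) with hwdef
  have hw : ∀ k : Fin n, w k = if k = z0 then v z0 else v k * (1 - v z0) := by
    intro k
    have : w k = v k + ∑ i, v i * N i k := by
      simp [hwdef, Matrix.vecMul_add, Matrix.vecMul_one, Matrix.vecMul, dotProduct]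
    rw [this]
    by_cases hk : k = z0
    · have : ∑ i, v i * N i k = 0 := by
        refine Finset.sum_eq_zero fun l _ => ?_
        simp [hN, hk]
      rw [this, hk, add_zero]; simp
    · have : ∑ i, v i * N i k = v z0 * (-(v k)) := by
        rw [Finset.sum_eq_single z0]
        · simp [hN, hk]
        · intro i _ hne; simp [hN, hne]
        · simp
      rw [this, if_neg hk]; ring
  have hwspan : ∀ k : Fin n, k ≠ z0 → w k ∈ Ideal.span {a} := by
    intro k hk
    rw [hw k, if_neg hk, Ideal.mem_span_singleton]
    exact ⟨-(v k), by rw [ha]; ring⟩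
  -- w ∈ Um(span a)
  have hwum : w ∈ Um n R (Ideal.span {a}) := by
    constructor
    · exact vecMul_unimodular hb gU
    · intro i
      by_cases hi : i = z0
      · rw [hi, hw z0, if_pos rfl]
        have : v z0 - e1 n R z0 = a := by simp [e1, ha, hz0]
        rw [this]
        exact Ideal.mem_span_singleton_self a
      · have h0 : i.val ≠ 0 := fun h => hi (Fin.ext h)
        simpa [e1, h0] using hwspan i hi
  rw [hyp a] at hwum
  obtain ⟨h, ⟨hdet, hcong⟩, hweq⟩ := hwum
  refine ⟨h * gU⁻¹, ⟨?_, ?_⟩, ?_⟩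
  · -- determinant
    have hval : ((h * gU⁻¹ : GL (Fin n) R) : Matrix (Fin n) (Fin n) R)
        = (h : Matrix (Fin n) (Fin n) R) * (1 - N) := by
      rw [Units.val_mul]; rfl
    rw [hval, Matrix.det_mul, hdet, one_mul]
    have htri : (1 - N : Matrix (Fin n) (Fin n) R).BlockTriangular id := by
      intro i j hij
      have hi : i ≠ z0 := by
        intro hh
        rw [hh] at hij
        exact absurd hij (by simp [hz0, Fin.le_def])
      simp only [Matrix.sub_apply, Matrix.one_apply, hN, Matrix.of_apply]
      have : i ≠ j := fun hh => by subst hh; exact lt_irrefl _ hij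
      simp [this, hi]
    rw [Matrix.det_of_upperTriangular htri]
    refine Finset.prod_eq_one fun i _ => ?_
    simp [hN, Matrix.sub_apply, Matrix.one_apply]
  · -- congruence mod I
    show MC I _
    have hval : ((h * gU⁻¹ : GL (Fin n) R) : Matrix (Fin n) (Fin n) R)
        = (h : Matrix (Fin n) (Fin n) R) * (1 - N) := by
      rw [Units.val_mul]; rfl
    rw [hval]
    refine MC_mul (MC_mono haspan hcong) ?_
    intro i j
    simp only [Matrix.sub_apply, hN, Matrix.of_apply]
    by_cases hc : i = z0 ∧ j ≠ z0
    · simpa [hc] using I.neg_mem (I.neg_mem (hvI j hc.2))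
    · simp [hc]
  · -- v is the first row
    have hval : ((h * gU⁻¹ : GL (Fin n) R) : Matrix (Fin n) (Fin n) R)
        = (h : Matrix (Fin n) (Fin n) R) * (1 - N) := by
      rw [Units.val_mul]; rfl
    show v = rowOne _
    rw [rowOne, hval, ← Matrix.vecMul_vecMul]
    have : Matrix.vecMul (e1 n R) (h : Matrix (Fin n) (Fin n) R) = w := by
      rw [hweq]; rfl
    rw [this, hwdef, Matrix.vecMul_vecMul, hG1, Matrix.vecMul_one]

end S9
namespace S9

variable {R : Type*} [CommRing R]

lemma symp_forward {n : ℕ} (hn4 : 4 ≤ n) (hn2 : n % 2 = 0)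
    (hyp : ∀ a : R, Um n R (Ideal.span {a}) = firstRows (Sprel n R (Ideal.span {a})))
    (I : Ideal R) : Um n R I ⊆ firstRows (Sprel n R I) := by
  have hn0 : 0 < n := by omega
  have hn1 : 1 < n := by omega
  set z0 : Fin n := ⟨0, hn0⟩ with hz0
  set z1 : Fin n := ⟨1, hn1⟩ with hz1
  have hz10 : z1 ≠ z0 := by simp [hz0, hz1, Fin.ext_iff]
  have hsz1 : sigmaPerm n z1 = z0 := by
    apply Fin.ext
    rw [sigma_val_odd hn2 z1 (by simp [hz1])]
    simp [hz0, hz1]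
  have hsz0 : sigmaPerm n z0 = z1 := by
    rw [← hsz1, sigma_sigma hn2]
  rintro v ⟨⟨b, hb⟩, hv⟩
  have hvI : ∀ i : Fin n, i ≠ z0 → v i ∈ I := by
    intro i hi
    have h0 : i.val ≠ 0 := fun h => hi (Fin.ext h)
    simpa [e1, h0] using hv i
  set a : R := v z0 - 1 with ha
  have haI : a ∈ I := by simpa [e1, ha, hz0] using hv z0
  have haspan : Ideal.span {a} ≤ I := by
    rw [Ideal.span_le, Set.singleton_subset_iff]; exact haI
  -- the two clearing matrices and companions
  set N1 : Matrix (Fin n) (Fin n) R :=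
    Matrix.of fun i k =>
      if i = z0 ∧ 2 ≤ k.val then -(v k)
      else if k = z1 ∧ 2 ≤ i.val then -(((-1 : R)) ^ i.val * v (sigmaPerm n i))
      else 0 with hN1
  set S1 : Matrix (Fin n) (Fin n) R :=
    Matrix.of fun i k =>
      if i = z1 ∧ 2 ≤ k.val then v k
      else if k = z1 ∧ 2 ≤ i.val then v i
      else 0 with hS1
  set N2 : Matrix (Fin n) (Fin n) R :=
    Matrix.of fun i k => if i = z0 ∧ k = z1 then -(v z1) else 0 with hN2
  set S2 : Matrix (Fin n) (Fin n) R :=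
    Matrix.of fun i k => if i = z1 ∧ k = z1 then v z1 else 0 with hS2
  have hz0v : z0.val = 0 := rfl
  have hz1v : z1.val = 1 := rfl
  -- basic vanishing facts
  have hN1z1row : ∀ k, N1 z1 k = 0 := by
    intro k; simp [hN1, hz10, hz1v]
  have hN1col0 : ∀ i, N1 i z0 = 0 := by
    intro i
    simp [hN1, hz0v, show ¬ z0 = z1 from fun h => hz10 h.symm]
  -- chi * N1 = S1
  have hchiN1 : chiMat n R * N1 = S1 := by
    ext i k
    rw [chi_mul_apply hn2]
    by_cases hi1 : i = z1
    · subst hi1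
      rw [hsz1]
      by_cases hk : 2 ≤ k.val
      · simp [hN1, hS1, hk, hz1v, pow_one]
      · simp [hN1, hS1, hk, hz1v, hz0v, pow_one,
          show ¬ k = z0 ∨ True from Or.inr trivial]
    · by_cases hi0 : i = z0
      · subst hi0
        rw [hsz0, hN1z1row]
        simp [hS1, show ¬ z0 = z1 from fun h => hz10 h.symm, hz0v, mul_zero]
      · have hi2 : 2 ≤ i.val := by
          have h0 : i.val ≠ 0 := fun h => hi0 (Fin.ext h)
          have h1 : i.val ≠ 1 := fun h => hi1 (Fin.ext h)
          omega
        have hs2 : 2 ≤ (sigmaPerm n i).val := sigma_two_le hn2 i hi2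
        have hsne0 : ¬ sigmaPerm n i = z0 := fun h => by
          rw [h] at hs2; simp [hz0v] at hs2
        by_cases hk : k = z1
        · subst hk
          have : N1 (sigmaPerm n i) z1
              = -(((-1 : R)) ^ (sigmaPerm n i).val * v (sigmaPerm n (sigmaPerm n i))) := by
            simp [hN1, hsne0, hs2, hz1v]
          rw [this, sigma_sigma hn2, neg_one_pow_sigma hn2]
          have hsq : ((-1 : R)) ^ i.val * ((-1 : R)) ^ i.val = 1 := by
            rw [← pow_add]; exact Even.neg_one_pow ⟨i.val, rfl⟩
          have hv2 : ((-1 : R)) ^ i.val * -(-(-1 : R) ^ i.val * v i) = v i := by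
            calc ((-1 : R)) ^ i.val * -(-(-1 : R) ^ i.val * v i)
                = ((-1 : R)) ^ i.val * ((-1 : R)) ^ i.val * v i := by ring
              _ = v i := by rw [hsq, one_mul]
          rw [hv2]
          simp [hS1, hi1, hi2]
        · have : N1 (sigmaPerm n i) k = 0 := by
            simp [hN1, hsne0, hk]
          rw [this, mul_zero]
          simp [hS1, hi1, hk]
  -- S1 symmetric
  have hS1T : S1ᵀ = S1 := by
    ext i k
    rw [Matrix.transpose_apply]
    simp only [hS1, Matrix.of_apply]
    split_ifs with h1 h2 h3 h4 h5 <;>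
      first
      | rfl
      | (exfalso; simp_all [Fin.ext_iff, hz1v] <;> omega)
  -- S1 * N1 = 0
  have hS1N1 : S1 * N1 = 0 := by
    ext i k
    rw [Matrix.mul_apply, Matrix.zero_apply]
    by_cases hi : i = z1
    · subst hi
      by_cases hk : k = z1
      · subst hk
        have hterm : ∀ l : Fin n, S1 z1 l * N1 l z1
            = -(if 2 ≤ l.val then ((-1 : R)) ^ l.val * (v l * v (sigmaPerm n l)) else 0) := by
          intro l
          by_cases hl : 2 ≤ l.val
          · have hlne0 : ¬ l = z0 := fun h => by rw [h] at hl; simp [hz0v] at hl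
            have e1 : S1 z1 l = v l := by simp [hS1, hl]
            have e2 : N1 l z1 = -(((-1 : R)) ^ l.val * v (sigmaPerm n l)) := by
              simp [hN1, hlne0, hl]
            rw [e1, e2, if_pos hl]; ring
          · have e1 : S1 z1 l = 0 := by simp [hS1, hl, hz1v]
            rw [e1, zero_mul, if_neg hl, neg_zero]
        rw [Finset.sum_congr rfl fun l _ => hterm l, Finset.sum_neg_distrib,
          pairsum hn2, neg_zero]
      · refine Finset.sum_eq_zero fun l _ => ?_
        by_cases hl : 2 ≤ l.val
        · have hlne0 : ¬ l = z0 := fun h => by rw [h] at hl; simp [hz0v] at hl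
          have : N1 l k = 0 := by simp [hN1, hlne0, hk]
          rw [this, mul_zero]
        · have : S1 z1 l = 0 := by simp [hS1, hl, hz1v]
          rw [this, zero_mul]
    · refine Finset.sum_eq_zero fun l _ => ?_
      by_cases hl : l = z1
      · subst hl
        rw [hN1z1row, mul_zero]
      · have : S1 i l = 0 := by simp [hS1, hi, hl]
        rw [this, zero_mul]
  -- N1 * N1 = 0
  have hN1N1 : N1 * N1 = 0 := by
    ext i k
    rw [Matrix.mul_apply, Matrix.zero_apply]
    by_cases hi : i = z0
    · subst hi
      by_cases hk : k = z1
      · subst hk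
        have hterm : ∀ l : Fin n, N1 z0 l * N1 l z1
            = if 2 ≤ l.val then ((-1 : R)) ^ l.val * (v l * v (sigmaPerm n l)) else 0 := by
          intro l
          by_cases hl : 2 ≤ l.val
          · have hlne0 : ¬ l = z0 := fun h => by rw [h] at hl; simp [hz0v] at hl
            have e1 : N1 z0 l = -(v l) := by simp [hN1, hl]
            have e2 : N1 l z1 = -(((-1 : R)) ^ l.val * v (sigmaPerm n l)) := by
              simp [hN1, hlne0, hl]
            rw [e1, e2, if_pos hl]; ring
          · have e1 : N1 z0 l = 0 := by
              simp [hN1, hl, show ¬ z0 = z1 from fun h => hz10 h.symm, hz0v]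
            rw [e1, zero_mul, if_neg hl]
        rw [Finset.sum_congr rfl fun l _ => hterm l, pairsum hn2]
      · refine Finset.sum_eq_zero fun l _ => ?_
        by_cases hl : 2 ≤ l.val
        · have hlne0 : ¬ l = z0 := fun h => by rw [h] at hl; simp [hz0v] at hl
          have : N1 l k = 0 := by simp [hN1, hlne0, hk]
          rw [this, mul_zero]
        · have : N1 z0 l = 0 := by
            simp [hN1, hl, show ¬ z0 = z1 from fun h => hz10 h.symm, hz0v]
          rw [this, zero_mul]
    · refine Finset.sum_eq_zero fun l _ => ?_
      by_cases hl : l = z1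
      · subst hl; rw [hN1z1row, mul_zero]
      · have : N1 i l = 0 := by simp [hN1, hi, hl]
        rw [this, zero_mul]
  -- N2 facts
  have hN2N2 : N2 * N2 = 0 := by
    ext i k
    rw [Matrix.mul_apply, Matrix.zero_apply]
    refine Finset.sum_eq_zero fun l _ => ?_
    by_cases hl : l = z1
    · have : N2 l k = 0 := by simp [hN2, hl, hz10]
      rw [this, mul_zero]
    · have : N2 i l = 0 := by simp [hN2, hl]
      rw [this, zero_mul]
  have hchiN2 : chiMat n R * N2 = S2 := by
    ext i k
    rw [chi_mul_apply hn2]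
    by_cases hi : i = z1
    · subst hi
      rw [hsz1]
      by_cases hk : k = z1
      · subst hk
        simp [hN2, hS2, hz1v, pow_one]
      · simp [hN2, hS2, hk, hz1v, pow_one]
    · have hs : ¬ sigmaPerm n i = z0 := by
        intro hh
        apply hi
        have h2 := congrArg (sigmaPerm n) hh
        rw [sigma_sigma hn2, hsz0] at h2
        exact h2
      have : N2 (sigmaPerm n i) k = 0 := by simp [hN2, hs]
      rw [this, mul_zero]
      simp [hS2, hi]
  have hS2T : S2ᵀ = S2 := by
    ext i k
    rw [Matrix.transpose_apply]
    simp only [hS2, Matrix.of_apply]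
    split_ifs with h1 h2 <;> first | rfl | (exfalso; tauto)
  have hS2N2 : S2 * N2 = 0 := by
    ext i k
    rw [Matrix.mul_apply, Matrix.zero_apply]
    refine Finset.sum_eq_zero fun l _ => ?_
    by_cases hl : l = z1
    · have : N2 l k = 0 := by simp [hN2, hl, hz10]
      rw [this, mul_zero]
    · have : S2 i l = 0 := by simp [hS2, hl]
      rw [this, zero_mul]
  -- units
  have hG1a : (1 + N1) * (1 - N1) = 1 := by
    have h : (1 + N1) * (1 - N1) = 1 - N1 * N1 := by noncomm_ring
    rw [h, hN1N1, sub_zero]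
  have hG1b : (1 - N1) * (1 + N1) = 1 := by
    have h : (1 - N1) * (1 + N1) = 1 - N1 * N1 := by noncomm_ring
    rw [h, hN1N1, sub_zero]
  have hG2a : (1 + N2) * (1 - N2) = 1 := by
    have h : (1 + N2) * (1 - N2) = 1 - N2 * N2 := by noncomm_ring
    rw [h, hN2N2, sub_zero]
  have hG2b : (1 - N2) * (1 + N2) = 1 := by
    have h : (1 - N2) * (1 + N2) = 1 - N2 * N2 := by noncomm_ring
    rw [h, hN2N2, sub_zero]
  set gU1 : GL (Fin n) R := ⟨1 + N1, 1 - N1, hG1a, hG1b⟩ with hgU1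
  set gU2 : GL (Fin n) R := ⟨1 + N2, 1 - N2, hG2a, hG2b⟩ with hgU2
  set g : GL (Fin n) R := gU1 * gU2 with hg
  have hgval : (g : Matrix (Fin n) (Fin n) R) = (1 + N1) * (1 + N2) := by
    rw [hg, Units.val_mul]
  have hginvval : ((g⁻¹ : GL (Fin n) R) : Matrix (Fin n) (Fin n) R)
      = (1 - N2) * (1 - N1) := by
    have hrev : (g⁻¹ : GL (Fin n) R) = gU2⁻¹ * gU1⁻¹ := by
      rw [hg]; exact _root_.mul_inv_rev gU1 gU2
    rw [hrev, Units.val_mul]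
    rfl
  -- symplecticity of g
  have hsymp1 : (1 + N1)ᵀ * chiMat n R * (1 + N1) = chiMat n R :=
    symp_of hn2 hchiN1 hS1T hS1N1
  have hsymp2 : (1 + N2)ᵀ * chiMat n R * (1 + N2) = chiMat n R :=
    symp_of hn2 hchiN2 hS2T hS2N2
  have hsympg : ((g : Matrix (Fin n) (Fin n) R))ᵀ * chiMat n R *
      (g : Matrix (Fin n) (Fin n) R) = chiMat n R := by
    rw [hgval]; exact mat_symp_mul hsymp1 hsymp2
  -- the transformed row
  set w1 : Fin n → R := Matrix.vecMul v (1 + N1) with hw1def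
  have hw1 : ∀ k : Fin n, w1 k = if 2 ≤ k.val then v k * (1 - v z0) else v k := by
    intro k
    have hsum : w1 k = v k + ∑ i, v i * N1 i k := by
      simp [hw1def, Matrix.vecMul_add, Matrix.vecMul_one, Matrix.vecMul, dotProduct]
    rw [hsum]
    by_cases hk0 : k = z0
    · subst hk0
      rw [if_neg (by simp [hz0v])]
      have : ∑ i, v i * N1 i z0 = 0 :=
        Finset.sum_eq_zero fun l _ => by rw [hN1col0, mul_zero]
      rw [this, add_zero]
    · by_cases hk1 : k = z1
      · subst hk1
        rw [if_neg (by simp [hz1v])]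
        have hterm : ∀ i : Fin n, v i * N1 i z1
            = -(if 2 ≤ i.val then ((-1 : R)) ^ i.val * (v i * v (sigmaPerm n i)) else 0) := by
          intro i
          by_cases hi : 2 ≤ i.val
          · have hine0 : ¬ i = z0 := fun h => by rw [h] at hi; simp [hz0v] at hi
            have : N1 i z1 = -(((-1 : R)) ^ i.val * v (sigmaPerm n i)) := by
              simp [hN1, hine0, hi]
            rw [this, if_pos hi]; ring
          · have : N1 i z1 = 0 := by simp [hN1, hi, hz1v]
            rw [this, mul_zero, if_neg hi, neg_zero]
        have : ∑ i, v i * N1 i z1 = 0 := by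
          rw [Finset.sum_congr rfl fun i _ => hterm i, Finset.sum_neg_distrib,
            pairsum hn2, neg_zero]
        rw [this, add_zero]
      · have hk2 : 2 ≤ k.val := by
          have h0 : k.val ≠ 0 := fun h => hk0 (Fin.ext h)
          have h1 : k.val ≠ 1 := fun h => hk1 (Fin.ext h)
          omega
        rw [if_pos hk2]
        have : ∑ i, v i * N1 i k = v z0 * (-(v k)) := by
          rw [Finset.sum_eq_single z0]
          · simp [hN1, hk2]
          · intro i _ hne
            have : N1 i k = 0 := by simp [hN1, hne, hk1]
            rw [this, mul_zero]
          · simp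
        rw [this]; ring
  set w2 : Fin n → R := Matrix.vecMul w1 (1 + N2) with hw2def
  have hw1z0 : w1 z0 = v z0 := by rw [hw1]; simp [hz0v]
  have hw1z1 : w1 z1 = v z1 := by rw [hw1]; simp [hz1v]
  have hw2 : ∀ k : Fin n, w2 k = if k = z1 then v z1 * (1 - v z0) else w1 k := by
    intro k
    have hsum : w2 k = w1 k + ∑ i, w1 i * N2 i k := by
      simp [hw2def, Matrix.vecMul_add, Matrix.vecMul_one, Matrix.vecMul, dotProduct]
    rw [hsum]
    by_cases hk : k = z1
    · subst hk
      have : ∑ i, w1 i * N2 i z1 = w1 z0 * (-(v z1)) := by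
        rw [Finset.sum_eq_single z0]
        · simp [hN2]
        · intro i _ hne
          have : N2 i z1 = 0 := by simp [hN2, hne]
          rw [this, mul_zero]
        · simp
      rw [this, if_pos rfl, hw1z0, hw1z1]; ring
    · have : ∑ i, w1 i * N2 i k = 0 :=
        Finset.sum_eq_zero fun i _ => by
          have : N2 i k = 0 := by simp [hN2, hk]
          rw [this, mul_zero]
      rw [this, add_zero, if_neg hk]
  have hw2vecg : w2 = Matrix.vecMul v (g : Matrix (Fin n) (Fin n) R) := by
    rw [hgval, ← Matrix.vecMul_vecMul, ← hw1def, ← hw2def]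
  -- w2 ∈ Um (span a)
  have hw2span : ∀ k : Fin n, k ≠ z0 → w2 k ∈ Ideal.span {a} := by
    intro k hk
    rw [Ideal.mem_span_singleton]
    by_cases hk1 : k = z1
    · subst hk1
      rw [hw2, if_pos rfl]
      exact ⟨-(v z1), by rw [ha]; ring⟩
    · have hk2 : 2 ≤ k.val := by
        have h0 : k.val ≠ 0 := fun h => hk (Fin.ext h)
        have h1 : k.val ≠ 1 := fun h => hk1 (Fin.ext h)
        omega
      rw [hw2, if_neg hk1, hw1, if_pos hk2]
      exact ⟨-(v k), by rw [ha]; ring⟩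
  have hw2z0 : w2 z0 = v z0 := by
    rw [hw2, if_neg (fun h => hz10 h.symm), hw1z0]
  have hw2um : w2 ∈ Um n R (Ideal.span {a}) := by
    constructor
    · rw [hw2vecg]; exact vecMul_unimodular hb g
    · intro i
      by_cases hi : i = z0
      · subst hi
        rw [hw2z0]
        have : v z0 - e1 n R z0 = a := by simp [e1, ha, hz0]
        rw [this]
        exact Ideal.mem_span_singleton_self a
      · have h0 : i.val ≠ 0 := fun h => hi (Fin.ext h)
        simpa [e1, h0] using hw2span i hi
  rw [hyp a] at hw2um
  obtain ⟨h, ⟨hsp, hcong⟩, hweq⟩ := hw2um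
  refine ⟨h * g⁻¹, ⟨?_, ?_⟩, ?_⟩
  · -- symplectic
    show _ = _
    rw [Units.val_mul]
    exact mat_symp_mul hsp (mat_symp_inv g hsympg)
  · -- congruent to 1 mod I
    show MC I _
    rw [Units.val_mul, hginvval]
    refine MC_mul (MC_mono haspan hcong) (MC_mul ?_ ?_)
    · intro i j
      simp only [Matrix.sub_apply, Matrix.one_apply, hN2, Matrix.of_apply]
      by_cases hc : i = z0 ∧ j = z1
      · simpa [hc] using I.neg_mem (I.neg_mem (hvI z1 hz10))
      · simp [hc]
    · intro i j
      simp only [Matrix.sub_apply, Matrix.one_apply, hN1, Matrix.of_apply]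
      by_cases hc1 : i = z0 ∧ 2 ≤ j.val
      · have hjne : j ≠ z0 := fun hh => by rw [hh] at hc1; simp [hz0v] at hc1
        simpa [hc1] using I.neg_mem (I.neg_mem (hvI j hjne))
      · by_cases hc2 : j = z1 ∧ 2 ≤ i.val
        · have hs2 : 2 ≤ (sigmaPerm n i).val := sigma_two_le hn2 i hc2.2
          have hsne : sigmaPerm n i ≠ z0 := fun hh => by
            rw [hh] at hs2; simp [hz0v] at hs2
          simpa [hc1, hc2, hz1v] using
            I.neg_mem (I.neg_mem (I.mul_mem_left _ (hvI _ hsne)))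
        · simp [hc1, hc2]
  · -- v is the first row
    show v = rowOne _
    rw [rowOne, Units.val_mul, ← Matrix.vecMul_vecMul]
    have he : Matrix.vecMul (e1 n R) (h : Matrix (Fin n) (Fin n) R) = w2 := by
      rw [hweq]; rfl
    rw [he, hw2vecg, Matrix.vecMul_vecMul, ← Units.val_mul, mul_inv_cancel,
      Units.val_one, Matrix.vecMul_one]

end S9
/-- If relative unimodular rows are completable for all principal
ideals, then they are completable for all ideals — (1) linear case `n ≥ 2`,
(2) symplectic case `n = 2m ≥ 4`. -/
theorem statement9 (R : Type*) [CommRing R] :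
    (∀ n : ℕ, 2 ≤ n →
      (∀ a : R, Um n R (Ideal.span {a}) = firstRows (SLrel n R (Ideal.span {a}))) →
      ∀ I : Ideal R, Um n R I = firstRows (SLrel n R I)) ∧
    (∀ m : ℕ, 2 ≤ m →
      (∀ a : R, Um (2 * m) R (Ideal.span {a}) =
        firstRows (Sprel (2 * m) R (Ideal.span {a}))) →
      ∀ I : Ideal R, Um (2 * m) R I = firstRows (Sprel (2 * m) R I)) := by
  constructor
  · intro n hn hyp I
    apply Set.Subset.antisymm
    · exact S9.linear_forward hn hyp I
    · exact S9.firstRows_sub_Um (by omega) I _ (fun g hg => hg.2)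
  · intro m hm hyp I
    apply Set.Subset.antisymm
    · exact S9.symp_forward (by omega) (by omega) hyp I
    · exact S9.firstRows_sub_Um (by omega) I _ (fun g hg => hg.2)
end

section
/- Let R be an affine ℝ-algebra satisfying condition P (either R has no real maximal ideal, or the intersection of all real maximal ideals of R has height at least 1). Then the polynomial ring R[X] also satisfies condition P. -/
open Matrix BigOperators

open Paper

/-- The contraction of a real maximal ideal of `R[X]` to `R` is a real maximal
ideal of `R`. -/
theorem comap_realMax {R : Type*} [CommRing R] [Algebra ℝ R]
    {M : Ideal (Polynomial R)} (h : realMax M) :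
    realMax (M.comap (Polynomial.C : R →+* Polynomial R)) := by
  obtain ⟨hmax, ⟨e⟩⟩ := h
  let φ : Polynomial R →+* ℝ := (e : Polynomial R ⧸ M ≃+* ℝ).toRingHom.comp
    (Ideal.Quotient.mk M)
  have hker : RingHom.ker φ = M := by
    ext x
    simp only [φ, RingHom.mem_ker, RingHom.comp_apply, RingEquiv.toRingHom_eq_coe,
      RingHom.coe_coe]
    rw [show (0 : ℝ) = e 0 by simp, (e.injective.eq_iff),
      Ideal.Quotient.eq_zero_iff_mem]
  set ψ : R →+* ℝ := φ.comp (Polynomial.C : R →+* Polynomial R) with hψ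
  have hsurj : Function.Surjective ψ := by
    intro a
    refine ⟨algebraMap ℝ R a, ?_⟩
    have h1 : ψ.comp (algebraMap ℝ R) = RingHom.id ℝ := Subsingleton.elim _ _
    have : (ψ.comp (algebraMap ℝ R)) a = a := by rw [h1]; rfl
    exact this
  have hkψ : RingHom.ker ψ = M.comap (Polynomial.C : R →+* Polynomial R) := by
    rw [hψ, ← RingHom.comap_ker, hker]
  refine ⟨hkψ ▸ RingHom.ker_isMaximal_of_surjective ψ hsurj,
    ⟨hkψ ▸ RingHom.quotientKerEquivOfSurjective hsurj⟩⟩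

/-- The contraction of a minimal prime of `R[X]` to `R` is a minimal prime of `R`. -/
theorem comap_minimalPrime {R : Type*} [CommRing R]
    {q : Ideal (Polynomial R)} (hq : q ∈ minimalPrimes (Polynomial R)) :
    q.comap (Polynomial.C : R →+* Polynomial R) ∈ minimalPrimes R := by
  obtain ⟨⟨hqp, -⟩, hqmin⟩ := hq
  haveI : q.IsPrime := hqp
  refine ⟨⟨Ideal.IsPrime.comap _, bot_le⟩, ?_⟩
  rintro y ⟨hyp, -⟩ hle
  -- `map C y` is a prime contained in `q`, so `q ≤ map C y` by minimality of `q`.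
  have h1 : Ideal.map (Polynomial.C : R →+* Polynomial R) y ≤ q :=
    le_trans (Ideal.map_mono hle) Ideal.map_comap_le
  have h2 : q ≤ Ideal.map (Polynomial.C : R →+* Polynomial R) y :=
    hqmin ⟨(haveI := hyp; Ideal.isPrime_map_C_of_isPrime), bot_le⟩ h1
  intro x hx
  have : (Polynomial.C x : Polynomial R) ∈
      Ideal.map (Polynomial.C : R →+* Polynomial R) y := h2 hx
  have := Ideal.mem_map_C_iff.mp this 0
  simpa using this

/-- If an affine `ℝ`-algebra `R` satisfies condition **P**, then so
does the polynomial ring `R[X]`. -/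
theorem statement11 (R : Type*) [CommRing R] [Algebra ℝ R]
    (hfg : Algebra.FiniteType ℝ R) (hP : conditionP R) :
    conditionP (Polynomial R) := by
  rcases hP with h | h
  · left
    intro M hM
    exact h _ (comap_realMax hM)
  · right
    intro q hq hle
    set p := q.comap (Polynomial.C : R →+* Polynomial R) with hp
    refine h p (comap_minimalPrime hq) ?_
    intro x hx
    -- `x` lies in every real maximal ideal of `R`; show `C x ∈ q`, i.e. `x ∈ p`.
    have hCx : (Polynomial.C x : Polynomial R) ∈
        sInf { m : Ideal (Polynomial R) | realMax m } := by
      rw [Ideal.mem_sInf]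
      intro M hM
      have hrm := comap_realMax hM
      have : x ∈ M.comap (Polynomial.C : R →+* Polynomial R) :=
        (Ideal.mem_sInf.mp hx) hrm
      exact this
    exact hle hCx
end

section
/- Let R be a commutative ring and I ⊂ R an ideal. Then the sequence K_1Sp(R,I) →^f K_1(R,I) →^H W'_E(R,I) is exact: the image of the forgetful map f equals the kernel of H, i.e. for [α] ∈ K_1(R,I) one has H([α]) = [χ_1] if and only if [α] lies in the image of f. -/
open Matrix BigOperators

open Paper


namespace S16

variable {R : Type*} [CommRing R] {ι κ : Type*} [Fintype ι] [DecidableEq ι]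
  [Fintype κ] [DecidableEq κ]

/-- elementary matrix -/
def gen (i j : ι) (a : R) : Matrix ι ι R := 1 + Matrix.single i j a

lemma gen_mul_gen (i j : ι) (h : i ≠ j) (a b : R) :
    (gen i j a : Matrix ι ι R) * gen i j b = gen i j (a + b) := by
  have h0 : (Matrix.single i j a : Matrix ι ι R) * Matrix.single i j b = 0 :=
    Matrix.single_mul_single_of_ne (c := a) i j i h.symm b
  simp [gen, mul_add, add_mul, h0, Matrix.single_add, add_assoc]

/-- elementary matrix as a unit -/
def genU (i j : ι) (h : i ≠ j) (a : R) : GL ι R :=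
  ⟨gen i j a, gen i j (-a),
    by rw [gen_mul_gen i j h]; simp [gen],
    by rw [gen_mul_gen i j h]; simp [gen]⟩

@[simp] lemma genU_coe (i j : ι) (h : i ≠ j) (a : R) :
    ((genU i j h a : GL ι R) : Matrix ι ι R) = gen i j a := rfl

def E' (ι : Type*) [Fintype ι] [DecidableEq ι] (R : Type*) [CommRing R] :
    Subgroup (GL ι R) :=
  Subgroup.closure { g | ∃ i j : ι, i ≠ j ∧ ∃ a : R, (g : Matrix ι ι R) = gen i j a }

def Erel' (ι : Type*) [Fintype ι] [DecidableEq ι] {R : Type*} [CommRing R]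
    (I : Ideal R) : Subgroup (GL ι R) :=
  Subgroup.closure
    { g | ∃ ε ∈ E' ι R, ∃ t : GL ι R,
        (∃ i j : ι, i ≠ j ∧ ∃ a ∈ I, (t : Matrix ι ι R) = gen i j a) ∧
        g = ε * t * ε⁻¹ }

lemma genU_mem_E (i j : ι) (h : i ≠ j) (a : R) : genU i j h a ∈ E' ι R :=
  Subgroup.subset_closure ⟨i, j, h, a, rfl⟩

lemma genU_mem_Erel (i j : ι) (h : i ≠ j) {a : R} {I : Ideal R} (ha : a ∈ I) :
    genU i j h a ∈ Erel' ι I :=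
  Subgroup.subset_closure ⟨1, one_mem _, genU i j h a, ⟨i, j, h, a, ha, rfl⟩, by group⟩

lemma Erel_le_E {I : Ideal R} : Erel' ι I ≤ E' ι R := by
  rw [Erel']
  refine Subgroup.closure_le _ |>.2 ?_
  rintro g ⟨ε, hε, t, ⟨i, j, hij, a, _, hta⟩, rfl⟩
  exact mul_mem (mul_mem hε (Subgroup.subset_closure ⟨i, j, hij, a, hta⟩)) (inv_mem hε)

/-- normality of `Erel'` in `E'` -/
lemma conj_mem_Erel {I : Ideal R} {e x : GL ι R} (he : e ∈ E' ι R)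
    (hx : x ∈ Erel' ι I) : e * x * e⁻¹ ∈ Erel' ι I := by
  induction hx using Subgroup.closure_induction with
  | mem y hy =>
      obtain ⟨ε, hε, t, ht, rfl⟩ := hy
      refine Subgroup.subset_closure ⟨e * ε, mul_mem he hε, t, ht, by group⟩
  | one => simpa using one_mem _
  | mul y z _ _ hy hz =>
      have h : e * (y * z) * e⁻¹ = (e * y * e⁻¹) * (e * z * e⁻¹) := by group
      rw [h]; exact mul_mem hy hz
  | inv y _ hy =>
      have : e * y⁻¹ * e⁻¹ = (e * y * e⁻¹)⁻¹ := by group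
      rw [this]; exact inv_mem hy

end S16

namespace S16

variable {R : Type*} [CommRing R] {ι κ : Type*} [Fintype ι] [DecidableEq ι]
  [Fintype κ] [DecidableEq κ]

lemma E'_eq_Erel_top : E' ι R = Erel' ι (⊤ : Ideal R) := by
  apply le_antisymm
  · refine Subgroup.closure_le _ |>.2 ?_
    rintro g ⟨i, j, hij, a, ha⟩
    refine Subgroup.subset_closure ⟨1, one_mem _, g, ⟨i, j, hij, a, trivial, ha⟩, by group⟩
  · exact Erel_le_E

/-- reduction mod I on GL -/
def q (I : Ideal R) : GL ι R →* GL ι (R ⧸ I) :=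
  Units.map (RingHom.mapMatrix (Ideal.Quotient.mk I)).toMonoidHom

lemma q_coe (I : Ideal R) (g : GL ι R) :
    ((q I g : GL ι (R ⧸ I)) : Matrix ι ι (R ⧸ I)) =
      (g : Matrix ι ι R).map (Ideal.Quotient.mk I) := rfl

/-- congruence subgroup as kernel -/
def Krel (ι : Type*) [Fintype ι] [DecidableEq ι] {R : Type*} [CommRing R]
    (I : Ideal R) : Subgroup (GL ι R) := (q (ι := ι) I).ker

lemma mem_Krel_iff {I : Ideal R} {g : GL ι R} :
    g ∈ Krel ι I ↔ ∀ i j, (g : Matrix ι ι R) i j - (1 : Matrix ι ι R) i j ∈ I := by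
  constructor
  · intro h i j
    have h1 : ((q I g : GL ι (R ⧸ I)) : Matrix ι ι (R ⧸ I)) = 1 := by
      rw [show (q I g) = 1 from h]; rfl
    rw [q_coe] at h1
    have h2 := congrFun (congrFun h1 i) j
    simp only [Matrix.map_apply] at h2
    have h3 : (1 : Matrix ι ι (R ⧸ I)) i j =
        Ideal.Quotient.mk I ((1 : Matrix ι ι R) i j) := by
      by_cases hij : i = j <;> simp [Matrix.one_apply, hij]
    rw [h3] at h2
    exact (Ideal.Quotient.mk_eq_mk_iff_sub_mem _ _).1 h2
  · intro h
    have : ((q I g : GL ι (R ⧸ I)) : Matrix ι ι (R ⧸ I)) = 1 := by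
      rw [q_coe]
      ext i j
      have h3 : (1 : Matrix ι ι (R ⧸ I)) i j =
          Ideal.Quotient.mk I ((1 : Matrix ι ι R) i j) := by
        by_cases hij : i = j <;> simp [Matrix.one_apply, hij]
      rw [Matrix.map_apply, h3]
      exact (Ideal.Quotient.mk_eq_mk_iff_sub_mem _ _).2 (h i j)
    exact Units.ext this

lemma map_gen (I : Ideal R) {i j : ι} {a : R} (ha : a ∈ I) :
    (gen i j a : Matrix ι ι R).map (Ideal.Quotient.mk I) = 1 := by
  ext i' j'
  have : Ideal.Quotient.mk I a = 0 := (Ideal.Quotient.eq_zero_iff_mem).2 ha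
  by_cases h1 : i = i' <;> by_cases h2 : j = j' <;>
    simp [gen, Matrix.one_apply, Matrix.single, Matrix.map_apply, h1, h2, this]

lemma Erel_le_Krel {I : Ideal R} : Erel' ι I ≤ Krel ι I := by
  refine Subgroup.closure_le _ |>.2 ?_
  rintro g ⟨ε, hε, t, ⟨i, j, hij, a, haI, hta⟩, rfl⟩
  have ht : q I t = 1 := by
    apply Units.ext
    rw [q_coe, hta, map_gen I haI]; rfl
  have : q I (ε * t * ε⁻¹) = 1 := by
    rw [_root_.map_mul, _root_.map_mul, ht, map_inv, mul_one, mul_inv_cancel]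
  exact this

/-- transport along an index equivalence -/
def glMap (e : ι ≃ κ) : GL ι R →* GL κ R :=
  Units.map ((Matrix.reindexAlgEquiv R R e).toRingEquiv.toRingHom.toMonoidHom)

lemma glMap_coe (e : ι ≃ κ) (g : GL ι R) :
    ((glMap e g : GL κ R) : Matrix κ κ R) = Matrix.reindex e e (g : Matrix ι ι R) := rfl

lemma reindex_gen (e : ι ≃ κ) (i j : ι) (a : R) :
    Matrix.reindex e e (gen i j a : Matrix ι ι R) = gen (e i) (e j) a := by
  ext i' j'
  simp only [gen, Matrix.reindex_apply, Matrix.submatrix_apply, Matrix.add_apply,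
    Matrix.one_apply, Matrix.single, Matrix.of_apply]
  congr 1
  · by_cases h : e.symm i' = e.symm j' <;>
      simp [h, e.symm.injective.eq_iff.symm.trans (Iff.rfl), show (e.symm i' = e.symm j') = (i' = j') from propext e.symm.injective.eq_iff, h]
  · by_cases h1 : i = e.symm i' <;> by_cases h2 : j = e.symm j' <;>
      simp [h1, h2, Equiv.eq_symm_apply] <;> aesop

lemma glMap_mem_E {e : ι ≃ κ} {g : GL ι R} (hg : g ∈ E' ι R) :
    glMap e g ∈ E' κ R := by
  induction hg using Subgroup.closure_induction with
  | mem y hy =>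
      obtain ⟨i, j, hij, a, ha⟩ := hy
      refine Subgroup.subset_closure ⟨e i, e j, by simp [e.injective.ne_iff, hij], a, ?_⟩
      rw [glMap_coe, ha, reindex_gen]
  | one => simpa using one_mem _
  | mul y z _ _ hy hz => rw [_root_.map_mul]; exact mul_mem hy hz
  | inv y _ hy => rw [map_inv]; exact inv_mem hy

lemma glMap_mem_Erel {I : Ideal R} {e : ι ≃ κ} {g : GL ι R} (hg : g ∈ Erel' ι I) :
    glMap e g ∈ Erel' κ I := by
  induction hg using Subgroup.closure_induction with
  | mem y hy =>
      obtain ⟨ε, hε, t, ⟨i, j, hij, a, haI, hta⟩, rfl⟩ := hy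
      rw [_root_.map_mul, _root_.map_mul, map_inv]
      refine Subgroup.subset_closure
        ⟨glMap e ε, glMap_mem_E hε, glMap e t,
          ⟨e i, e j, by simp [e.injective.ne_iff, hij], a, haI, ?_⟩, rfl⟩
      rw [glMap_coe, hta, reindex_gen]
  | one => simpa using one_mem _
  | mul y z _ _ hy hz => rw [_root_.map_mul]; exact mul_mem hy hz
  | inv y _ hy => rw [map_inv]; exact inv_mem hy

end S16

namespace S16

set_option linter.unusedSectionVars false

variable {R : Type*} [CommRing R] {ι κ : Type*} [Fintype ι] [DecidableEq ι]
  [Fintype κ] [DecidableEq κ]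

lemma fromBlocks_stdBasis_ul (i j : ι) (a : R) :
    Matrix.fromBlocks (Matrix.single i j a) 0 0 (0 : Matrix κ κ R) =
      Matrix.single (Sum.inl i) (Sum.inl j) a := by
  ext i' j'
  rcases i' with i' | i' <;> rcases j' with j' | j' <;>
    simp [Matrix.single, Matrix.fromBlocks]

lemma fromBlocks_stdBasis_ur (i : ι) (j : κ) (a : R) :
    Matrix.fromBlocks (0 : Matrix ι ι R) (Matrix.single i j a) 0
        (0 : Matrix κ κ R) =
      Matrix.single (Sum.inl i) (Sum.inr j) a := by
  ext i' j'
  rcases i' with i' | i' <;> rcases j' with j' | j' <;>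
    simp [Matrix.single, Matrix.fromBlocks]

/-- upper block unitriangular unit -/
def Uu (M : Matrix ι ι R) : GL (ι ⊕ ι) R :=
  ⟨Matrix.fromBlocks 1 M 0 1, Matrix.fromBlocks 1 (-M) 0 1,
    by simp [Matrix.fromBlocks_multiply, ← Matrix.fromBlocks_one],
    by simp [Matrix.fromBlocks_multiply, ← Matrix.fromBlocks_one]⟩

@[simp] lemma Uu_coe (M : Matrix ι ι R) :
    ((Uu M : GL (ι ⊕ ι) R) : Matrix (ι ⊕ ι) (ι ⊕ ι) R) = Matrix.fromBlocks 1 M 0 1 := rfl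

lemma Uu_mul (M N : Matrix ι ι R) : Uu M * Uu N = Uu (M + N) := by
  apply Units.ext
  simp [Matrix.fromBlocks_multiply, add_comm]

lemma Uu_zero : (Uu (0 : Matrix ι ι R)) = 1 := by
  apply Units.ext
  simp [← Matrix.fromBlocks_one]

lemma Uu_std (i j : ι) (a : R) :
    Uu (Matrix.single i j a) =
      genU (R := R) (Sum.inl i) (Sum.inr j) (by simp) a := by
  apply Units.ext
  rw [Uu_coe, genU_coe, gen, ← fromBlocks_stdBasis_ur i j a, ← Matrix.fromBlocks_one,
    Matrix.fromBlocks_add]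
  simp

lemma Uu_mem_Erel {I : Ideal R} {M : Matrix ι ι R} (hM : ∀ i j, M i j ∈ I) :
    Uu M ∈ Erel' (ι ⊕ ι) I := by
  classical
  have key : ∀ s : Finset (ι × ι), ∀ M : Matrix ι ι R, (∀ i j, M i j ∈ I) →
      (∀ p : ι × ι, p ∉ s → M p.1 p.2 = 0) → Uu M ∈ Erel' (ι ⊕ ι) I := by
    intro s
    induction s using Finset.induction with
    | empty =>
        intro M hI h0
        have hM0 : M = 0 := by ext i j; exact h0 (i, j) (by simp)
        rw [hM0, Uu_zero]; exact one_mem _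
    | @insert p s hp ih =>
        intro M hI h0
        set M' : Matrix ι ι R := M - Matrix.single p.1 p.2 (M p.1 p.2) with hM'
        have hsplit : Uu M = Uu (Matrix.single p.1 p.2 (M p.1 p.2)) * Uu M' := by
          rw [Uu_mul]; congr 1; rw [hM']; abel
        rw [hsplit]
        refine mul_mem ?_ (ih M' (fun i j => ?_) (fun q hq => ?_))
        · rw [Uu_std]; exact genU_mem_Erel _ _ _ (hI p.1 p.2)
        · have hstd : Matrix.single p.1 p.2 (M p.1 p.2) i j ∈ I := by
            by_cases h1 : p.1 = i ∧ p.2 = j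
            · obtain ⟨rfl, rfl⟩ := h1
              simpa [Matrix.single] using hI p.1 p.2
            · have : Matrix.single p.1 p.2 (M p.1 p.2) i j = 0 := by
                simp only [Matrix.single, Matrix.of_apply]
                exact if_neg h1
              rw [this]; exact I.zero_mem
          rw [hM', Matrix.sub_apply]
          exact I.sub_mem (hI i j) hstd
        · by_cases hqp : q = p
          · subst hqp; simp [hM', Matrix.sub_apply, Matrix.single]
          · have hq'' : q ∉ insert p s := by simp [hq, hqp]
            have h2 : Matrix.single p.1 p.2 (M p.1 p.2) q.1 q.2 = 0 := by
              simp only [Matrix.single, Matrix.of_apply]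
              refine if_neg (fun hc => hqp ?_)
              exact Prod.ext hc.1.symm hc.2.symm
            simp [hM', Matrix.sub_apply, h2, h0 q hq'']
  exact key Finset.univ M hM (fun p hp => absurd (Finset.mem_univ p) hp)

lemma Uu_mem_E (M : Matrix ι ι R) : Uu M ∈ E' (ι ⊕ ι) R := by
  rw [E'_eq_Erel_top]; exact Uu_mem_Erel (fun _ _ => trivial)

/-- lower block unitriangular unit -/
def Lu (M : Matrix ι ι R) : GL (ι ⊕ ι) R := glMap (Equiv.sumComm ι ι) (Uu M)

@[simp] lemma Lu_coe (M : Matrix ι ι R) :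
    ((Lu M : GL (ι ⊕ ι) R) : Matrix (ι ⊕ ι) (ι ⊕ ι) R) = Matrix.fromBlocks 1 0 M 1 := by
  rw [Lu, glMap_coe, Uu_coe, Matrix.reindex_apply,
    show ⇑(Equiv.sumComm ι ι).symm = Sum.swap from rfl,
    Matrix.fromBlocks_submatrix_sum_swap_sum_swap]

lemma Lu_mul (M N : Matrix ι ι R) : Lu M * Lu N = Lu (M + N) := by
  rw [Lu, Lu, Lu, ← _root_.map_mul, Uu_mul]

lemma Lu_mem_Erel {I : Ideal R} {M : Matrix ι ι R} (hM : ∀ i j, M i j ∈ I) :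
    Lu M ∈ Erel' (ι ⊕ ι) I := glMap_mem_Erel (Uu_mem_Erel hM)

lemma Lu_mem_E (M : Matrix ι ι R) : Lu M ∈ E' (ι ⊕ ι) R := by
  rw [E'_eq_Erel_top]; exact Lu_mem_Erel (fun _ _ => trivial)

end S16

namespace S16

set_option linter.unusedSectionVars false

variable {R : Type*} [CommRing R] {ι κ : Type*} [Fintype ι] [DecidableEq ι]
  [Fintype κ] [DecidableEq κ]

/-- `g ⊥ 1` as a unit -/
def inlU (g : GL ι R) : GL (ι ⊕ κ) R :=
  ⟨Matrix.fromBlocks (g : Matrix ι ι R) 0 0 1,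
   Matrix.fromBlocks ((g⁻¹ : GL ι R) : Matrix ι ι R) 0 0 1,
   by simp [Matrix.fromBlocks_multiply, ← Matrix.fromBlocks_one, Units.mul_inv],
   by simp [Matrix.fromBlocks_multiply, ← Matrix.fromBlocks_one, Units.inv_mul]⟩

@[simp] lemma inlU_coe (g : GL ι R) :
    ((inlU g : GL (ι ⊕ κ) R) : Matrix (ι ⊕ κ) (ι ⊕ κ) R) =
      Matrix.fromBlocks (g : Matrix ι ι R) 0 0 1 := rfl

lemma inlU_mul (g h : GL ι R) : (inlU (g * h) : GL (ι ⊕ κ) R) = inlU g * inlU h := by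
  apply Units.ext; simp [Matrix.fromBlocks_multiply]

lemma inlU_one : (inlU (1 : GL ι R) : GL (ι ⊕ κ) R) = 1 := by
  apply Units.ext; simp [← Matrix.fromBlocks_one]

lemma inlU_inv (g : GL ι R) : (inlU g⁻¹ : GL (ι ⊕ κ) R) = (inlU g)⁻¹ := by
  apply eq_inv_of_mul_eq_one_left
  rw [← inlU_mul, inv_mul_cancel, inlU_one]

lemma inlU_mem_E {g : GL ι R} (hg : g ∈ E' ι R) : (inlU g : GL (ι ⊕ κ) R) ∈ E' (ι ⊕ κ) R := by
  induction hg using Subgroup.closure_induction with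
  | mem y hy =>
      obtain ⟨i, j, hij, a, ha⟩ := hy
      refine Subgroup.subset_closure ⟨Sum.inl i, Sum.inl j, by simp [hij], a, ?_⟩
      rw [inlU_coe, ha, gen, gen, ← fromBlocks_stdBasis_ul (κ := κ) i j a,
        ← Matrix.fromBlocks_one, Matrix.fromBlocks_add]
      simp
  | one => rw [inlU_one]; exact one_mem _
  | mul y z _ _ hy hz => rw [inlU_mul]; exact mul_mem hy hz
  | inv y _ hy => rw [inlU_inv]; exact inv_mem hy

lemma inlU_mem_Erel {I : Ideal R} {g : GL ι R} (hg : g ∈ Erel' ι I) :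
    (inlU g : GL (ι ⊕ κ) R) ∈ Erel' (ι ⊕ κ) I := by
  induction hg using Subgroup.closure_induction with
  | mem y hy =>
      obtain ⟨ε, hε, t, ⟨i, j, hij, a, haI, hta⟩, rfl⟩ := hy
      rw [inlU_mul, inlU_mul, inlU_inv]
      refine Subgroup.subset_closure
        ⟨inlU ε, inlU_mem_E hε, inlU t, ⟨Sum.inl i, Sum.inl j, by simp [hij], a, haI, ?_⟩, rfl⟩
      rw [inlU_coe, hta, gen, gen, ← fromBlocks_stdBasis_ul (κ := κ) i j a,
        ← Matrix.fromBlocks_one, Matrix.fromBlocks_add]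
      simp
  | one => rw [inlU_one]; exact one_mem _
  | mul y z _ _ hy hz => rw [inlU_mul]; exact mul_mem hy hz
  | inv y _ hy => rw [inlU_inv]; exact inv_mem hy

/-- `1 ⊥ g` as a unit -/
def inrU (g : GL ι R) : GL (κ ⊕ ι) R := glMap (Equiv.sumComm ι κ) (inlU g)

@[simp] lemma inrU_coe (g : GL ι R) :
    ((inrU g : GL (κ ⊕ ι) R) : Matrix (κ ⊕ ι) (κ ⊕ ι) R) =
      Matrix.fromBlocks 1 0 0 (g : Matrix ι ι R) := by
  rw [inrU, glMap_coe, inlU_coe, Matrix.reindex_apply,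
    show ⇑(Equiv.sumComm ι κ).symm = Sum.swap from rfl,
    Matrix.fromBlocks_submatrix_sum_swap_sum_swap]

lemma inrU_mul (g h : GL ι R) : (inrU (g * h) : GL (κ ⊕ ι) R) = inrU g * inrU h := by
  rw [inrU, inrU, inrU, inlU_mul, _root_.map_mul]

lemma inrU_inv (g : GL ι R) : (inrU g⁻¹ : GL (κ ⊕ ι) R) = (inrU g)⁻¹ := by
  rw [inrU, inrU, inlU_inv, map_inv]

lemma inrU_mem_E {g : GL ι R} (hg : g ∈ E' ι R) :
    (inrU g : GL (κ ⊕ ι) R) ∈ E' (κ ⊕ ι) R := glMap_mem_E (inlU_mem_E hg)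

lemma inrU_mem_Erel {I : Ideal R} {g : GL ι R} (hg : g ∈ Erel' ι I) :
    (inrU g : GL (κ ⊕ ι) R) ∈ Erel' (κ ⊕ ι) I := glMap_mem_Erel (inlU_mem_Erel hg)

lemma inlU_mem_Krel {I : Ideal R} {g : GL ι R} (hg : g ∈ Krel ι I) :
    (inlU g : GL (ι ⊕ κ) R) ∈ Krel (ι ⊕ κ) I := by
  rw [mem_Krel_iff] at hg ⊢
  intro i j
  rcases i with i | i <;> rcases j with j | j
  · simpa [Matrix.one_apply, Sum.inl.injEq] using hg i j
  · simp
  · simp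
  · simp [Matrix.one_apply, Sum.inr.injEq]

lemma glMap_mem_Krel {I : Ideal R} {e : ι ≃ κ} {g : GL ι R} (hg : g ∈ Krel ι I) :
    glMap e g ∈ Krel κ I := by
  rw [mem_Krel_iff] at hg ⊢
  intro i j
  rw [glMap_coe, Matrix.reindex_apply, Matrix.submatrix_apply]
  have h1 : (1 : Matrix κ κ R) i j = (1 : Matrix ι ι R) (e.symm i) (e.symm j) := by
    by_cases h : i = j <;> simp [Matrix.one_apply, h, e.symm.injective.eq_iff]
  rw [h1]
  exact hg _ _

lemma inrU_mem_Krel {I : Ideal R} {g : GL ι R} (hg : g ∈ Krel ι I) :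
    (inrU g : GL (κ ⊕ ι) R) ∈ Krel (κ ⊕ ι) I := glMap_mem_Krel (inlU_mem_Krel hg)

/-- relative Whitehead lemma: `g ⊥ g⁻¹ ∈ E(R, I)` for `g ≡ 1 mod I` -/
lemma whitehead {I : Ideal R} {g : GL ι R} (hg : g ∈ Krel ι I) :
    inlU g * inrU g⁻¹ ∈ Erel' (ι ⊕ ι) I := by
  have hginv : g⁻¹ ∈ Krel ι I := inv_mem hg
  have hgI : ∀ i j, ((g : Matrix ι ι R) - 1) i j ∈ I := by
    intro i j; rw [Matrix.sub_apply]; exact mem_Krel_iff.1 hg i j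
  have hgiI : ∀ i j, ((1 : Matrix ι ι R) - ((g⁻¹ : GL ι R) : Matrix ι ι R)) i j ∈ I := by
    intro i j; rw [Matrix.sub_apply]
    simpa using I.neg_mem (mem_Krel_iff.1 hginv i j)
  set A : Matrix ι ι R := (g : Matrix ι ι R) with hA
  set B : Matrix ι ι R := ((g⁻¹ : GL ι R) : Matrix ι ι R) with hB
  have hAB : A * B = 1 := Units.mul_inv g
  have hBA : B * A = 1 := Units.inv_mul g
  have m1 : (Matrix.fromBlocks 1 A 0 1 : Matrix (ι ⊕ ι) (ι ⊕ ι) R) *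
      Matrix.fromBlocks 1 0 (-B) 1 = Matrix.fromBlocks 0 A (-B) 1 := by
    rw [Matrix.fromBlocks_multiply]; simp [Matrix.mul_neg, hAB]
  have m2 : (Matrix.fromBlocks 0 A (-B) 1 : Matrix (ι ⊕ ι) (ι ⊕ ι) R) *
      Matrix.fromBlocks 1 A 0 1 = Matrix.fromBlocks 0 A (-B) 0 := by
    rw [Matrix.fromBlocks_multiply]; simp [Matrix.neg_mul, hBA]
  have m3 : (Matrix.fromBlocks 0 A (-B) 0 : Matrix (ι ⊕ ι) (ι ⊕ ι) R) *
      Matrix.fromBlocks 1 (-1) 0 1 = Matrix.fromBlocks 0 A (-B) B := by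
    rw [Matrix.fromBlocks_multiply]; simp [Matrix.neg_mul, Matrix.mul_neg]
  have m4 : (Matrix.fromBlocks 0 A (-B) B : Matrix (ι ⊕ ι) (ι ⊕ ι) R) *
      Matrix.fromBlocks 1 0 1 1 = Matrix.fromBlocks A A 0 B := by
    rw [Matrix.fromBlocks_multiply]; simp
  have m5 : (Matrix.fromBlocks A A 0 B : Matrix (ι ⊕ ι) (ι ⊕ ι) R) *
      Matrix.fromBlocks 1 (-1) 0 1 = Matrix.fromBlocks A 0 0 B := by
    rw [Matrix.fromBlocks_multiply]; simp [Matrix.mul_neg]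
  have key : inlU g * inrU g⁻¹ = Uu A * Lu (-B) * Uu A * Uu (-1) * Lu 1 * Uu (-1) := by
    apply Units.ext
    simp only [Units.val_mul, Uu_coe, Lu_coe, inlU_coe, inrU_coe]
    rw [m1, m2, m3, m4, m5, Matrix.fromBlocks_multiply]
    simp [← Matrix.coe_units_inv]
    exact ⟨hA.symm, hB.symm⟩
  have hUdec : Uu A = Uu (A - 1) * Uu 1 := by rw [Uu_mul, sub_add_cancel]
  have hLdec : Lu (-B) = Lu (1 - B) * Lu (-1) := by rw [Lu_mul]; congr 1; abel
  have hU1inv : Uu (-1 : Matrix ι ι R) = (Uu 1)⁻¹ := by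
    apply eq_inv_of_mul_eq_one_left
    rw [Uu_mul, neg_add_cancel, Uu_zero]
  have hL1 : Lu (1 : Matrix ι ι R) = (Lu (-1 : Matrix ι ι R))⁻¹ := by
    apply eq_inv_of_mul_eq_one_left
    rw [Lu_mul]
    have : (1 : Matrix ι ι R) + -1 = 0 := by abel
    rw [this]
    rw [Lu, Uu_zero, _root_.map_one]
  rw [key, hUdec, hLdec, hU1inv, hL1]
  have hgrp : Uu (A - 1) * Uu 1 * (Lu (1 - B) * Lu (-1)) * (Uu (A - 1) * Uu 1) *
      (Uu 1)⁻¹ * (Lu (-1 : Matrix ι ι R))⁻¹ * (Uu 1)⁻¹ =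
      Uu (A - 1) * ((Uu 1 * Lu (1 - B)) * (Uu 1)⁻¹) *
        ((Uu 1 * Lu (-1)) * Uu (A - 1) * (Uu 1 * Lu (-1))⁻¹) := by
    group
  rw [hgrp]
  have hA' : Uu (A - 1) ∈ Erel' (ι ⊕ ι) I := Uu_mem_Erel (fun i j => hgI i j)
  have hB' : Lu (1 - B) ∈ Erel' (ι ⊕ ι) I := Lu_mem_Erel (fun i j => hgiI i j)
  exact mul_mem (mul_mem hA' (conj_mem_Erel (Uu_mem_E 1) hB'))
    (conj_mem_Erel (mul_mem (Uu_mem_E 1) (Lu_mem_E (-1))) hA')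

end S16


namespace S16

set_option linter.unusedSectionVars false
set_option maxHeartbeats 1000000

open Paper

variable {R : Type*} [CommRing R]

/-- block equivalence -/
def blkE {a b N : ℕ} (h : a + b = N) : Fin a ⊕ Fin b ≃ Fin N :=
  finSumFinEquiv.trans (finCongr h)

def splitIdx {a b N : ℕ} (h : a + b = N) (i : Fin N) : Fin a ⊕ Fin b :=
  if hi : (i : ℕ) < a then Sum.inl ⟨i, hi⟩ else Sum.inr ⟨i - a, by omega⟩

lemma blkE_symm_apply {a b N : ℕ} (h : a + b = N) (i : Fin N) :
    (blkE h).symm i = splitIdx h i := by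
  rw [Equiv.symm_apply_eq]
  unfold splitIdx
  split_ifs with hi
  · exact Fin.ext (by simp [blkE])
  · refine Fin.ext ?_
    simp only [blkE, Equiv.trans_apply, finCongr_apply, Fin.coe_cast,
      finSumFinEquiv_apply_right, Fin.natAdd_mk]
    omega

lemma reindex_blk_apply {a b N : ℕ} (h : a + b = N)
    (M : Matrix (Fin a ⊕ Fin b) (Fin a ⊕ Fin b) R) (i j : Fin N) :
    (Matrix.reindex (blkE h) (blkE h) M) i j = M (splitIdx h i) (splitIdx h j) := by
  rw [Matrix.reindex_apply, Matrix.submatrix_apply, blkE_symm_apply, blkE_symm_apply]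

lemma osum_eq {a b N : ℕ} (h : a + b = N) (A : Matrix (Fin a) (Fin a) R)
    (B : Matrix (Fin b) (Fin b) R) :
    Matrix.reindex (finCongr h) (finCongr h) (Paper.osum A B) =
      Matrix.reindex (blkE h) (blkE h) (Matrix.fromBlocks A 0 0 B) := by
  subst h
  ext i j
  rw [reindex_blk_apply, show finCongr rfl = Equiv.refl (Fin (a + b)) from rfl,
    Matrix.reindex_apply]
  simp only [Equiv.refl_symm, Equiv.coe_refl, Matrix.submatrix_id_id]
  unfold Paper.osum splitIdx
  by_cases hi : (i : ℕ) < a <;> by_cases hj : (j : ℕ) < a <;>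
    simp [hi, hj, Matrix.fromBlocks]

lemma chi_blocks {a b N : ℕ} (h : a + b = N) (ha : a % 2 = 0) :
    Matrix.reindex (blkE h) (blkE h)
        (Matrix.fromBlocks (chiMat a R) 0 0 (chiMat b R)) = chiMat N R := by
  ext i j
  rw [reindex_blk_apply]
  unfold splitIdx chiMat
  by_cases hi : (i : ℕ) < a <;> by_cases hj : (j : ℕ) < a
  · rw [dif_pos hi, dif_pos hj]
    simp only [Matrix.fromBlocks, Sum.elim_inl, Matrix.of_apply]
    try split_ifs <;> first | rfl | (exfalso; omega)
  · rw [dif_pos hi, dif_neg hj]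
    simp only [Matrix.fromBlocks, Sum.elim_inl, Matrix.of_apply, Matrix.zero_apply]
    try split_ifs <;> first | rfl | (exfalso; omega)
  · rw [dif_neg hi, dif_pos hj]
    simp only [Matrix.fromBlocks, Sum.elim_inr, Matrix.of_apply, Matrix.zero_apply]
    try split_ifs <;> first | rfl | (exfalso; omega)
  · rw [dif_neg hi, dif_neg hj]
    simp only [Matrix.fromBlocks, Sum.elim_inr, Matrix.of_apply]
    try split_ifs <;> first | rfl | (exfalso; omega)

lemma stab_eq {k n N : ℕ} (h : k + n = N) (A : Matrix (Fin n) (Fin n) R) :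
    Paper.stabTo N A =
      Matrix.reindex (blkE h) (blkE h) (Matrix.fromBlocks 1 0 0 A) := by
  have hk : N - n = k := by omega
  ext i j
  rw [reindex_blk_apply]
  unfold Paper.stabTo splitIdx
  by_cases hi : (i : ℕ) < k <;> by_cases hj : (j : ℕ) < k
  · rw [Matrix.of_apply, dif_pos (show (i : ℕ) < N - n by omega), dif_pos hi, dif_pos hj]
    show _ = (1 : Matrix (Fin k) (Fin k) R) _ _
    rw [Matrix.one_apply]
    split_ifs with h1 h2 h3 <;>
      first | rfl | (exfalso; simp only [Fin.mk.injEq, Fin.ext_iff] at *; omega)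
  · rw [Matrix.of_apply, dif_pos (show (i : ℕ) < N - n by omega), dif_pos hi, dif_neg hj]
    rw [if_neg (by omega)]; rfl
  · rw [Matrix.of_apply, dif_neg (show ¬ (i : ℕ) < N - n by omega),
      dif_pos (show (j : ℕ) < N - n by omega), dif_neg hi, dif_pos hj]
    rfl
  · rw [Matrix.of_apply, dif_neg (show ¬ (i : ℕ) < N - n by omega),
      dif_neg (show ¬ (j : ℕ) < N - n by omega),
      dif_pos (show (i : ℕ) - (N - n) < n ∧ (j : ℕ) - (N - n) < n by
        constructor <;> omega),
      dif_neg hi, dif_neg hj]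
    show A _ _ = A _ _
    congr 1
    · exact Fin.ext (show (i : ℕ) - (N - n) = (i : ℕ) - k by omega)
    · exact Fin.ext (show (j : ℕ) - (N - n) = (j : ℕ) - k by omega)

lemma stab_self {n : ℕ} (A : Matrix (Fin n) (Fin n) R) : Paper.stabTo n A = A := by
  ext i j
  unfold Paper.stabTo
  rw [Matrix.of_apply, dif_neg (by omega), dif_neg (by omega),
    dif_pos (by constructor <;> omega)]
  congr 1
  · exact Fin.ext (show (i : ℕ) - (n - n) = (i : ℕ) by omega)
  · exact Fin.ext (show (j : ℕ) - (n - n) = (j : ℕ) by omega)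

/-- swapping the two blocks -/
lemma swap_blocks {ι κ : Type*} (X : Matrix ι ι R) (Y : Matrix κ κ R) :
    Matrix.reindex (Equiv.sumComm ι κ) (Equiv.sumComm ι κ) (Matrix.fromBlocks X 0 0 Y) =
      Matrix.fromBlocks Y 0 0 X := by
  rw [Matrix.reindex_apply, show ⇑(Equiv.sumComm ι κ).symm = Sum.swap from rfl,
    Matrix.fromBlocks_submatrix_sum_swap_sum_swap]

/-- three-block shuffle -/
lemma tri_shuffle {A B C : Type*} (Q : Matrix A A R) (P : Matrix B B R)
    (S : Matrix C C R) :
    Matrix.reindex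
        ((Equiv.sumCongr (Equiv.sumComm A B) (Equiv.refl C)).trans (Equiv.sumAssoc B A C))
        ((Equiv.sumCongr (Equiv.sumComm A B) (Equiv.refl C)).trans (Equiv.sumAssoc B A C))
        (Matrix.fromBlocks (Matrix.fromBlocks Q 0 0 P) 0 0 S) =
      Matrix.fromBlocks P 0 0 (Matrix.fromBlocks Q 0 0 S) := by
  ext i j
  rcases i with b | ac
  · rcases j with b' | ac'
    · rfl
    · rcases ac' with a' | c' <;> rfl
  · rcases ac with a | c <;> rcases j with b' | ac'
    · rfl
    · rcases ac' with a' | c' <;> rfl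
    · rfl
    · rcases ac' with a' | c' <;> rfl

lemma fromBlocks_reindex_right {ι κ₁ κ₂ : Type*} (u : κ₁ ≃ κ₂) (X : Matrix ι ι R)
    (Y : Matrix κ₁ κ₁ R) :
    Matrix.fromBlocks X 0 0 (Matrix.reindex u u Y) =
      Matrix.reindex (Equiv.sumCongr (Equiv.refl ι) u) (Equiv.sumCongr (Equiv.refl ι) u)
        (Matrix.fromBlocks X 0 0 Y) := by
  ext i j
  rcases i with i | i <;> rcases j with j | j <;> rfl

lemma fromBlocks_reindex_left {ι₁ ι₂ κ : Type*} (u : ι₁ ≃ ι₂) (X : Matrix ι₁ ι₁ R)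
    (Y : Matrix κ κ R) :
    Matrix.fromBlocks (Matrix.reindex u u X) 0 0 Y =
      Matrix.reindex (Equiv.sumCongr u (Equiv.refl κ)) (Equiv.sumCongr u (Equiv.refl κ))
        (Matrix.fromBlocks X 0 0 Y) := by
  ext i j
  rcases i with i | i <;> rcases j with j | j <;> rfl

end S16


namespace S16

set_option linter.unusedSectionVars false
set_option maxHeartbeats 1000000

open Paper

variable {R : Type*} [CommRing R]

lemma reindex_mul {ι κ : Type*} [Fintype ι] [Fintype κ] (e : ι ≃ κ)
    (A B : Matrix ι ι R) :
    Matrix.reindex e e (A * B) = Matrix.reindex e e A * Matrix.reindex e e B := by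
  rw [Matrix.reindex_apply, Matrix.reindex_apply, Matrix.reindex_apply,
    Matrix.submatrix_mul_equiv]

lemma reindex_transpose {ι κ : Type*} (e : ι ≃ κ) (A : Matrix ι ι R) :
    (Matrix.reindex e e A)ᵀ = Matrix.reindex e e Aᵀ := by
  rw [Matrix.reindex_apply, Matrix.reindex_apply, Matrix.transpose_submatrix]

lemma reindex_reindex {ι κ μ : Type*} (e : ι ≃ κ) (f : κ ≃ μ) (A : Matrix ι ι R) :
    Matrix.reindex f f (Matrix.reindex e e A) = Matrix.reindex (e.trans f) (e.trans f) A := by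
  rw [Matrix.reindex_apply, Matrix.reindex_apply, Matrix.reindex_apply,
    Matrix.submatrix_submatrix]
  rfl

lemma reindex_cancel {ι κ : Type*} (e : ι ≃ κ) (A : Matrix ι ι R) :
    Matrix.reindex e.symm e.symm (Matrix.reindex e e A) = A := by
  rw [reindex_reindex, Equiv.self_trans_symm, Matrix.reindex_apply]
  simp

/-- `I_k ⊥ (I_m ⊥ A) = I_{k+m} ⊥ A` -/
lemma stab_comp {n N k P : ℕ} (hnN : n ≤ N) (hP : k + N = P)
    (A : Matrix (Fin n) (Fin n) R) :
    Paper.stabTo P A = Matrix.reindex (blkE hP) (blkE hP)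
      (Matrix.fromBlocks 1 0 0 (Paper.stabTo N A)) := by
  have h1 : n ≤ P := by omega
  have h2 : P - n = k + (N - n) := by omega
  ext i j
  rw [reindex_blk_apply]
  unfold Paper.stabTo splitIdx
  by_cases hi : (i : ℕ) < k <;> by_cases hj : (j : ℕ) < k
  · rw [dif_pos hi, dif_pos hj, Matrix.of_apply, dif_pos (show (i : ℕ) < P - n by omega)]
    show _ = (1 : Matrix (Fin k) (Fin k) R) _ _
    rw [Matrix.one_apply]
    by_cases hij : (i : ℕ) = (j : ℕ) <;> simp [Fin.ext_iff, hij]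
  · rw [dif_pos hi, dif_neg hj, Matrix.of_apply,
      dif_pos (show (i : ℕ) < P - n by omega), if_neg (by omega)]
    rfl
  · rw [dif_neg hi, dif_pos hj]
    by_cases hi2 : (i : ℕ) < P - n
    · rw [Matrix.of_apply, dif_pos hi2, if_neg (by omega)]
      rfl
    · rw [Matrix.of_apply, dif_neg hi2, dif_pos (show (j : ℕ) < P - n by omega)]
      rfl
  · rw [dif_neg hi, dif_neg hj]
    rw [Matrix.fromBlocks_apply₂₂, Matrix.of_apply, Matrix.of_apply]
    by_cases hi2 : (i : ℕ) < P - n <;> by_cases hj2 : (j : ℕ) < P - n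
    · rw [dif_pos hi2, dif_pos (show ((⟨(i : ℕ) - k, by omega⟩ : Fin N) : ℕ) < N - n
        by simp only [Fin.val_mk]; omega)]
      by_cases hij : (i : ℕ) = (j : ℕ)
      · rw [if_pos hij, if_pos (by simp only [Fin.val_mk]; omega)]
      · rw [if_neg hij, if_neg (by simp only [Fin.val_mk]; omega)]
    · rw [dif_pos hi2, dif_pos (show ((⟨(i : ℕ) - k, by omega⟩ : Fin N) : ℕ) < N - n
        by simp only [Fin.val_mk]; omega), if_neg (by omega),
        if_neg (by simp only [Fin.val_mk]; omega)]
    · rw [dif_neg hi2, dif_pos (show (j : ℕ) < P - n from hj2),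
        dif_neg (show ¬ ((⟨(i : ℕ) - k, by omega⟩ : Fin N) : ℕ) < N - n
          by simp only [Fin.val_mk]; omega),
        dif_pos (show ((⟨(j : ℕ) - k, by omega⟩ : Fin N) : ℕ) < N - n
          by simp only [Fin.val_mk]; omega)]
    · rw [dif_neg hi2, dif_neg hj2,
        dif_neg (show ¬ ((⟨(i : ℕ) - k, by omega⟩ : Fin N) : ℕ) < N - n
          by simp only [Fin.val_mk]; omega),
        dif_neg (show ¬ ((⟨(j : ℕ) - k, by omega⟩ : Fin N) : ℕ) < N - n
          by simp only [Fin.val_mk]; omega),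
        dif_pos (show (i : ℕ) - (P - n) < n ∧ (j : ℕ) - (P - n) < n by
          constructor <;> omega),
        dif_pos (by constructor <;> (simp only [Fin.val_mk]; omega))]
      congr 1
      · exact Fin.ext (by simp only [Fin.val_mk]; omega)
      · exact Fin.ext (by simp only [Fin.val_mk]; omega)

/-- stabilization at the group level -/
def stabGL {n k N : ℕ} (h : k + n = N) (g : GL (Fin n) R) : GL (Fin N) R :=
  glMap (blkE h) (inrU g)

lemma stabGL_coe {n k N : ℕ} (h : k + n = N) (g : GL (Fin n) R) :
    ((stabGL h g : GL (Fin N) R) : Matrix (Fin N) (Fin N) R) =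
      Paper.stabTo N ((g : GL (Fin n) R) : Matrix (Fin n) (Fin n) R) := by
  rw [stabGL, glMap_coe, inrU_coe, stab_eq h]

lemma conj_sp {m : ℕ} (χ S : Matrix (Fin m) (Fin m) R) (e : GL (Fin m) R)
    (hkey : Sᵀ * χ * S =
      ((e : GL (Fin m) R) : Matrix (Fin m) (Fin m) R)ᵀ * χ *
        ((e : GL (Fin m) R) : Matrix (Fin m) (Fin m) R)) :
    (S * ((e⁻¹ : GL (Fin m) R) : Matrix (Fin m) (Fin m) R))ᵀ * χ *
      (S * ((e⁻¹ : GL (Fin m) R) : Matrix (Fin m) (Fin m) R)) = χ := by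
  have h5 : ((e⁻¹ : GL (Fin m) R) : Matrix (Fin m) (Fin m) R)ᵀ *
      ((e : GL (Fin m) R) : Matrix (Fin m) (Fin m) R)ᵀ = 1 := by
    rw [← Matrix.transpose_mul, Units.mul_inv, Matrix.transpose_one]
  have h6 : ((e : GL (Fin m) R) : Matrix (Fin m) (Fin m) R) *
      ((e⁻¹ : GL (Fin m) R) : Matrix (Fin m) (Fin m) R) = 1 := Units.mul_inv e
  set E : Matrix (Fin m) (Fin m) R := ((e⁻¹ : GL (Fin m) R) : Matrix (Fin m) (Fin m) R)
  set ec : Matrix (Fin m) (Fin m) R := ((e : GL (Fin m) R) : Matrix (Fin m) (Fin m) R)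
  calc (S * E)ᵀ * χ * (S * E) = Eᵀ * (Sᵀ * χ * S) * E := by
        rw [Matrix.transpose_mul]; simp only [Matrix.mul_assoc]
    _ = Eᵀ * (ecᵀ * χ * ec) * E := by rw [hkey]
    _ = (Eᵀ * ecᵀ) * χ * (ec * E) := by simp only [Matrix.mul_assoc]
    _ = χ := by rw [h5, h6, Matrix.one_mul, Matrix.mul_one]

lemma inv_sp {m : ℕ} (χ : Matrix (Fin m) (Fin m) R) (b : GL (Fin m) R)
    (hb : ((b : GL (Fin m) R) : Matrix (Fin m) (Fin m) R)ᵀ * χ *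
      ((b : GL (Fin m) R) : Matrix (Fin m) (Fin m) R) = χ) :
    ((b⁻¹ : GL (Fin m) R) : Matrix (Fin m) (Fin m) R)ᵀ * χ *
      ((b⁻¹ : GL (Fin m) R) : Matrix (Fin m) (Fin m) R) = χ := by
  have h := conj_sp χ 1 b (by rw [Matrix.transpose_one, Matrix.one_mul, Matrix.mul_one,
    hb])
  rwa [Matrix.one_mul] at h

end S16


set_option maxHeartbeats 4000000

open S16

/-- (exactness of `K₁Sp(R,I) → K₁(R,I) → W'_E(R,I)`), stated at the
level of representatives:  for `α ∈ GL_{2n}(R,I)`, the class of `αᵀ χ_n α` in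
`W'_E(R,I)` is trivial if and only if the class of `α` in `K₁(R,I)` comes from a
relative symplectic matrix, i.e. `α` agrees, after stabilization and up to a relative
elementary factor, with some `β ∈ Sp_{2m}(R,I)`. -/
theorem statement16 (R : Type*) [CommRing R] (I : Ideal R)
    (n : ℕ) (α : GL (Fin (2 * n)) R) (hα : α ∈ GLrel (2 * n) R I) :
    altRel I
        ⟨n, ((α : Matrix (Fin (2 * n)) (Fin (2 * n)) R))ᵀ * chiMat (2 * n) R *
          ((α : Matrix (Fin (2 * n)) (Fin (2 * n)) R))⟩
        (chiE R 1) ↔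
      ∃ m : ℕ, ∃ β ∈ Sprel (2 * m) R I, ∃ N : ℕ, 2 * n ≤ N ∧ 2 * m ≤ N ∧
        ∃ ε ∈ Erel N R I,
          stabTo N ((α : Matrix (Fin (2 * n)) (Fin (2 * n)) R)) =
            ((ε : GL (Fin N) R) : Matrix (Fin N) (Fin N) R) *
              stabTo N ((β : Matrix (Fin (2 * m)) (Fin (2 * m)) R)) := by
  classical
  set A2n : Matrix (Fin (2*n)) (Fin (2*n)) R := (α : Matrix (Fin (2*n)) (Fin (2*n)) R)
    with hA2n
  constructor
  · intro h
    unfold Paper.altRel Paper.chiE at h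
    simp only at h
    obtain ⟨t, ε, hεmem, heq0⟩ := h
    have hs1 : 2*n + 2*(1+t) = 2*(n+1+t) := by omega
    have hs2 : 2*1 + 2*(n+t) = 2*(n+1+t) := by omega
    have hs3 : 2*(1+t) + 2*n = 2*(n+1+t) := by omega
    have heq : Matrix.reindex (finCongr hs1) (finCongr hs1)
        (Paper.osum (A2nᵀ * chiMat (2*n) R * A2n) (chiMat (2*(1+t)) R)) =
        ((ε : GL (Fin (2*(n+1+t))) R) : Matrix (Fin (2*(n+1+t))) (Fin (2*(n+1+t))) R)ᵀ * (Matrix.reindex (finCongr hs2) (finCongr hs2)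
          (Paper.osum (chiMat (2*1) R) (chiMat (2*(n+t)) R))) * ((ε : GL (Fin (2*(n+1+t))) R) : Matrix (Fin (2*(n+1+t))) (Fin (2*(n+1+t))) R) := heq0
    rw [osum_eq hs1, osum_eq hs2, chi_blocks hs2 (by omega)] at heq
    -- the symplectic form of the stabilized α
    have hd2 : chiMat (2*(n+1+t)) R = Matrix.reindex (blkE hs3) (blkE hs3)
        (Matrix.fromBlocks (chiMat (2*(1+t)) R) 0 0 (chiMat (2*n) R)) :=
      (chi_blocks hs3 (by omega)).symm
    have dstab : Paper.stabTo (2*(n+1+t)) A2n = Matrix.reindex (blkE hs3) (blkE hs3)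
        (Matrix.fromBlocks 1 0 0 A2n) := stab_eq hs3 _
    have d3 : (Paper.stabTo (2*(n+1+t)) A2n)ᵀ * chiMat (2*(n+1+t)) R *
        Paper.stabTo (2*(n+1+t)) A2n = Matrix.reindex (blkE hs3) (blkE hs3)
        (Matrix.fromBlocks (chiMat (2*(1+t)) R) 0 0 (A2nᵀ * chiMat (2*n) R * A2n)) := by
      rw [dstab, hd2, reindex_transpose, ← reindex_mul, ← reindex_mul]
      congr 1
      rw [Matrix.fromBlocks_transpose]
      simp [Matrix.fromBlocks_multiply, Matrix.mul_assoc]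
    -- transport by the block swap
    set v : Fin (2*(n+1+t)) ≃ Fin (2*(n+1+t)) := (blkE hs1).symm.trans
      ((Equiv.sumComm (Fin (2*n)) (Fin (2*(1+t)))).trans (blkE hs3)) with hv
    have hvcomp : ∀ X : Matrix (Fin (2*n) ⊕ Fin (2*(1+t)))
        (Fin (2*n) ⊕ Fin (2*(1+t))) R,
        Matrix.reindex v v (Matrix.reindex (blkE hs1) (blkE hs1) X)
          = Matrix.reindex (blkE hs3) (blkE hs3)
            (Matrix.reindex (Equiv.sumComm (Fin (2*n)) (Fin (2*(1+t))))
              (Equiv.sumComm (Fin (2*n)) (Fin (2*(1+t)))) X) := by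
      intro X
      rw [reindex_reindex, reindex_reindex]
      have : (blkE hs1).trans v = (Equiv.sumComm (Fin (2*n)) (Fin (2*(1+t)))).trans
          (blkE hs3) := by
        apply Equiv.ext
        intro x
        simp [hv, Equiv.trans_apply]
      rw [this]
    have hstabkey : (Paper.stabTo (2*(n+1+t)) A2n)ᵀ * chiMat (2*(n+1+t)) R *
        Paper.stabTo (2*(n+1+t)) A2n = Matrix.reindex v v (Matrix.reindex (blkE hs1)
          (blkE hs1) (Matrix.fromBlocks (A2nᵀ * chiMat (2*n) R * A2n) 0 0
            (chiMat (2*(1+t)) R))) := by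
      rw [hvcomp, swap_blocks, d3]
    have hvchi : Matrix.reindex v v (chiMat (2*(n+1+t)) R) = chiMat (2*(n+1+t)) R := by
      conv_lhs => rw [← chi_blocks hs1 (show (2*n) % 2 = 0 by omega)]
      rw [hvcomp, swap_blocks]
      exact chi_blocks hs3 (by omega)
    set e : GL (Fin (2*(n+1+t))) R := glMap v ε with he_def
    have he : e ∈ Erel' (Fin (2*(n+1+t))) I := glMap_mem_Erel hεmem
    have hecoe : ((e : GL (Fin (2*(n+1+t))) R) : Matrix (Fin (2*(n+1+t))) (Fin (2*(n+1+t))) R) = Matrix.reindex v v ((ε : GL (Fin (2*(n+1+t))) R) : Matrix (Fin (2*(n+1+t))) (Fin (2*(n+1+t))) R) :=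
      glMap_coe _ _
    have keyχ : (Paper.stabTo (2*(n+1+t)) A2n)ᵀ * chiMat (2*(n+1+t)) R *
        Paper.stabTo (2*(n+1+t)) A2n = ((e : GL (Fin (2*(n+1+t))) R) : Matrix (Fin (2*(n+1+t))) (Fin (2*(n+1+t))) R)ᵀ * chiMat (2*(n+1+t)) R *
        ((e : GL (Fin (2*(n+1+t))) R) : Matrix (Fin (2*(n+1+t))) (Fin (2*(n+1+t))) R) := by
      rw [hstabkey, heq, reindex_mul, reindex_mul, ← reindex_transpose, hvchi, ← hecoe]
    -- the symplectic matrix β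
    set aGL : GL (Fin (2*(n+1+t))) R := stabGL hs3 α with haGL
    have haco : ((aGL : GL (Fin (2*(n+1+t))) R) : Matrix (Fin (2*(n+1+t))) (Fin (2*(n+1+t))) R) = Paper.stabTo (2*(n+1+t)) A2n := stabGL_coe hs3 α
    set β : GL (Fin (2*(n+1+t))) R := aGL * e⁻¹ with hβdef
    have hβco : ((β : GL (Fin (2*(n+1+t))) R) : Matrix (Fin (2*(n+1+t))) (Fin (2*(n+1+t))) R) = Paper.stabTo (2*(n+1+t)) A2n *
        ((e⁻¹ : GL (Fin (2*(n+1+t))) R) : Matrix _ _ R) := by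
      rw [hβdef, Units.val_mul, haco]
    have hβSp : ((β : GL (Fin (2*(n+1+t))) R) : Matrix (Fin (2*(n+1+t))) (Fin (2*(n+1+t))) R)ᵀ * chiMat (2*(n+1+t)) R * ((β : GL (Fin (2*(n+1+t))) R) : Matrix (Fin (2*(n+1+t))) (Fin (2*(n+1+t))) R) =
        chiMat (2*(n+1+t)) R := by
      rw [hβco]
      exact conj_sp _ _ _ keyχ
    have hβK : β ∈ Krel (Fin (2*(n+1+t))) I := by
      refine mul_mem ?_ (inv_mem (Erel_le_Krel he))
      exact glMap_mem_Krel (inrU_mem_Krel (mem_Krel_iff.2 hα))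
    have heqβ : Paper.stabTo (2*(n+1+t)) A2n = ((β : GL (Fin (2*(n+1+t))) R) : Matrix (Fin (2*(n+1+t))) (Fin (2*(n+1+t))) R) * ((e : GL (Fin (2*(n+1+t))) R) : Matrix (Fin (2*(n+1+t))) (Fin (2*(n+1+t))) R) := by
      rw [hβco, Matrix.mul_assoc, Units.inv_mul, Matrix.mul_one]
    -- Whitehead conjugation
    have hg0K : β⁻¹ ∈ Krel (Fin (2*(n+1+t))) I := inv_mem hβK
    set D : GL (Fin (2*(n+1+t)) ⊕ Fin (2*(n+1+t))) R := inlU β⁻¹ * inrU β⁻¹⁻¹ with hD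
    have hDmem : D ∈ Erel' (Fin (2*(n+1+t)) ⊕ Fin (2*(n+1+t))) I := whitehead hg0K
    set η : GL (Fin (2*(n+1+t)) ⊕ Fin (2*(n+1+t))) R := D * inrU e * D⁻¹ with hη
    have hηmem : η ∈ Erel' (Fin (2*(n+1+t)) ⊕ Fin (2*(n+1+t))) I :=
      mul_mem (mul_mem hDmem (inrU_mem_Erel he)) (inv_mem hDmem)
    have hDco : ((D : GL (Fin (2*(n+1+t)) ⊕ Fin (2*(n+1+t))) R) : Matrix (Fin (2*(n+1+t)) ⊕ Fin (2*(n+1+t))) (Fin (2*(n+1+t)) ⊕ Fin (2*(n+1+t))) R) = Matrix.fromBlocks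
        ((β⁻¹ : GL (Fin (2*(n+1+t))) R) : Matrix _ _ R) 0 0 ((β : GL (Fin (2*(n+1+t))) R) : Matrix (Fin (2*(n+1+t))) (Fin (2*(n+1+t))) R) := by
      rw [hD, Units.val_mul, inlU_coe, inrU_coe, inv_inv]
      simp [Matrix.fromBlocks_multiply]
    have hDinvco : ((D⁻¹ : GL (Fin (2*(n+1+t)) ⊕ Fin (2*(n+1+t))) R) : Matrix (Fin (2*(n+1+t)) ⊕ Fin (2*(n+1+t))) (Fin (2*(n+1+t)) ⊕ Fin (2*(n+1+t))) R) = Matrix.fromBlocks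
        ((β : GL (Fin (2*(n+1+t))) R) : Matrix (Fin (2*(n+1+t))) (Fin (2*(n+1+t))) R) 0 0 ((β⁻¹ : GL (Fin (2*(n+1+t))) R) : Matrix _ _ R) := by
      have hDi : D⁻¹ = inrU β⁻¹⁻¹⁻¹ * inlU β⁻¹⁻¹ := by
        rw [hD, _root_.mul_inv_rev, ← inlU_inv, ← inrU_inv]
      rw [hDi, Units.val_mul, inlU_coe, inrU_coe, inv_inv, inv_inv]
      simp [Matrix.fromBlocks_multiply]
    have hηco : ((η : GL (Fin (2*(n+1+t)) ⊕ Fin (2*(n+1+t))) R) : Matrix (Fin (2*(n+1+t)) ⊕ Fin (2*(n+1+t))) (Fin (2*(n+1+t)) ⊕ Fin (2*(n+1+t))) R) = Matrix.fromBlocks 1 0 0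
        (((β : GL (Fin (2*(n+1+t))) R) : Matrix (Fin (2*(n+1+t))) (Fin (2*(n+1+t))) R) * ((e : GL (Fin (2*(n+1+t))) R) : Matrix (Fin (2*(n+1+t))) (Fin (2*(n+1+t))) R) *
          ((β⁻¹ : GL (Fin (2*(n+1+t))) R) : Matrix _ _ R)) := by
      rw [hη, Units.val_mul, Units.val_mul, hDco, hDinvco, inrU_coe]
      simp [Matrix.fromBlocks_multiply, Units.inv_mul, Matrix.mul_assoc]
    -- conclude
    refine ⟨n+1+t, β, ⟨hβSp, fun i j => mem_Krel_iff.1 hβK i j⟩,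
      2*(n+1+t) + 2*(n+1+t), by omega, by omega, glMap (blkE rfl) η, ?_, ?_⟩
    · exact glMap_mem_Erel hηmem
    · rw [stab_comp (show 2*n ≤ 2*(n+1+t) by omega)
        (rfl : 2*(n+1+t) + 2*(n+1+t) = 2*(n+1+t) + 2*(n+1+t)),
        stab_comp (le_refl (2*(n+1+t)))
          (rfl : 2*(n+1+t) + 2*(n+1+t) = 2*(n+1+t) + 2*(n+1+t)), stab_self]
      rw [glMap_coe, ← reindex_mul]
      apply congrArg
      rw [hηco, heqβ]
      simp [Matrix.fromBlocks_multiply, Matrix.mul_assoc, Units.inv_mul]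
  · rintro ⟨m, β, hβmem, N, hnN, hmN, ε, hεmem, heq⟩
    obtain ⟨hβSp0, hβcong⟩ := hβmem
    set P : ℕ := 2*(N+n+m+1) with hPdef
    set T : ℕ := P - n - 1 with hTdef
    have hT1 : n + 1 + T = P := by omega
    have hkN : (P - N) + N = P := by omega
    have hka : (P - 2*n) + 2*n = P := by omega
    have hkb : (P - 2*m) + 2*m = P := by omega
    set a : GL (Fin P) R := stabGL hka α with hadef
    set b : GL (Fin P) R := stabGL hkb β with hbdef
    set ε₂ : GL (Fin P) R := stabGL hkN ε with he2def
    have haco : ((a : GL (Fin P) R) : Matrix (Fin P) (Fin P) R) = Paper.stabTo P A2n :=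
      stabGL_coe hka α
    have hbco : ((b : GL (Fin P) R) : Matrix (Fin P) (Fin P) R) =
        Paper.stabTo P ((β : GL (Fin (2*m)) R) : Matrix (Fin (2*m)) (Fin (2*m)) R) :=
      stabGL_coe hkb β
    have he2co : ((ε₂ : GL (Fin P) R) : Matrix (Fin P) (Fin P) R) =
        Paper.stabTo P ((ε : GL (Fin N) R) : Matrix (Fin N) (Fin N) R) :=
      stabGL_coe hkN ε
    have hε₂mem : ε₂ ∈ Erel' (Fin P) I := glMap_mem_Erel (inrU_mem_Erel hεmem)
    have hbK : b ∈ Krel (Fin P) I :=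
      glMap_mem_Krel (inrU_mem_Krel (mem_Krel_iff.2 hβcong))
    -- stabilized decomposition
    have hstabPα : Paper.stabTo P A2n =
        Paper.stabTo P ((ε : GL (Fin N) R) : Matrix (Fin N) (Fin N) R) *
        Paper.stabTo P ((β : GL (Fin (2*m)) R) : Matrix (Fin (2*m)) (Fin (2*m)) R) := by
      rw [stab_comp hnN hkN A2n, heq,
        show Matrix.fromBlocks 1 0 0
            (((ε : GL (Fin N) R) : Matrix (Fin N) (Fin N) R) *
              Paper.stabTo N ((β : GL (Fin (2*m)) R) : Matrix (Fin (2*m)) (Fin (2*m)) R)) =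
          Matrix.fromBlocks (1 : Matrix (Fin (P-N)) (Fin (P-N)) R) 0 0
              ((ε : GL (Fin N) R) : Matrix (Fin N) (Fin N) R) *
            Matrix.fromBlocks 1 0 0
              (Paper.stabTo N ((β : GL (Fin (2*m)) R) : Matrix (Fin (2*m)) (Fin (2*m)) R))
          from by simp [Matrix.fromBlocks_multiply],
        reindex_mul, ← stab_eq hkN, ← stab_comp hmN hkN]
    have hab : ((a : GL (Fin P) R) : Matrix (Fin P) (Fin P) R) =
        ((ε₂ : GL (Fin P) R) : Matrix (Fin P) (Fin P) R) *
        ((b : GL (Fin P) R) : Matrix (Fin P) (Fin P) R) := by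
      rw [haco, hbco, he2co, hstabPα]
    -- b is symplectic at level P
    have hchiPb : chiMat P R = Matrix.reindex (blkE hkb) (blkE hkb)
        (Matrix.fromBlocks (chiMat (P-2*m) R) 0 0 (chiMat (2*m) R)) :=
      (chi_blocks hkb (by omega)).symm
    have d3b : (Paper.stabTo P ((β : GL (Fin (2*m)) R) : Matrix (Fin (2*m)) (Fin (2*m)) R))ᵀ *
        chiMat P R *
        Paper.stabTo P ((β : GL (Fin (2*m)) R) : Matrix (Fin (2*m)) (Fin (2*m)) R) =
        Matrix.reindex (blkE hkb) (blkE hkb)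
          (Matrix.fromBlocks (chiMat (P-2*m) R) 0 0
            (((β : GL (Fin (2*m)) R) : Matrix (Fin (2*m)) (Fin (2*m)) R)ᵀ *
              chiMat (2*m) R *
              ((β : GL (Fin (2*m)) R) : Matrix (Fin (2*m)) (Fin (2*m)) R))) := by
      rw [stab_eq hkb, hchiPb, reindex_transpose, ← reindex_mul, ← reindex_mul]
      congr 1
      rw [Matrix.fromBlocks_transpose]
      simp [Matrix.fromBlocks_multiply, Matrix.mul_assoc]
    have hbSp : ((b : GL (Fin P) R) : Matrix (Fin P) (Fin P) R)ᵀ * chiMat P R *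
        ((b : GL (Fin P) R) : Matrix (Fin P) (Fin P) R) = chiMat P R := by
      rw [hbco, d3b, hβSp0]
      exact chi_blocks hkb (by omega)
    have hbiSp : ((b⁻¹ : GL (Fin P) R) : Matrix (Fin P) (Fin P) R)ᵀ * chiMat P R *
        ((b⁻¹ : GL (Fin P) R) : Matrix (Fin P) (Fin P) R) = chiMat P R := inv_sp _ b hbSp
    -- the elementary witness η over Fin P ⊕ Fin P
    set D : GL (Fin P ⊕ Fin P) R := inlU b * inrU b⁻¹ with hDdef
    have hDmem : D ∈ Erel' (Fin P ⊕ Fin P) I := whitehead hbK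
    set η : GL (Fin P ⊕ Fin P) R := inlU ε₂ * D with hηdef
    have hηmem : η ∈ Erel' (Fin P ⊕ Fin P) I := mul_mem (inlU_mem_Erel hε₂mem) hDmem
    have hηco : ((η : GL (Fin P ⊕ Fin P) R) : Matrix (Fin P ⊕ Fin P) (Fin P ⊕ Fin P) R) =
        Matrix.fromBlocks ((a : GL (Fin P) R) : Matrix (Fin P) (Fin P) R) 0 0
          ((b⁻¹ : GL (Fin P) R) : Matrix (Fin P) (Fin P) R) := by
      rw [hηdef, hDdef, Units.val_mul, Units.val_mul, inlU_coe, inlU_coe, inrU_coe, hab]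
      simp [Matrix.fromBlocks_multiply]
    have KEY : Matrix.fromBlocks
        (((a : GL (Fin P) R) : Matrix (Fin P) (Fin P) R)ᵀ * chiMat P R *
          ((a : GL (Fin P) R) : Matrix (Fin P) (Fin P) R)) 0 0 (chiMat P R) =
        ((η : GL (Fin P ⊕ Fin P) R) : Matrix (Fin P ⊕ Fin P) (Fin P ⊕ Fin P) R)ᵀ *
          (Matrix.fromBlocks (chiMat P R) 0 0 (chiMat P R)) *
          ((η : GL (Fin P ⊕ Fin P) R) : Matrix (Fin P ⊕ Fin P) (Fin P ⊕ Fin P) R) := by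
      rw [hηco, Matrix.fromBlocks_transpose]
      simp only [Matrix.fromBlocks_multiply, Matrix.transpose_zero, Matrix.zero_mul,
        Matrix.mul_zero, add_zero, zero_add]
      rw [hbiSp]
    -- the symplectic form of the stabilized α
    have hchiPa : chiMat P R = Matrix.reindex (blkE hka) (blkE hka)
        (Matrix.fromBlocks (chiMat (P-2*n) R) 0 0 (chiMat (2*n) R)) :=
      (chi_blocks hka (by omega)).symm
    have d3a : (Paper.stabTo P A2n)ᵀ * chiMat P R * Paper.stabTo P A2n =
        Matrix.reindex (blkE hka) (blkE hka)
          (Matrix.fromBlocks (chiMat (P-2*n) R) 0 0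
            (A2nᵀ * chiMat (2*n) R * A2n)) := by
      rw [stab_eq hka, hchiPa, reindex_transpose, ← reindex_mul, ← reindex_mul]
      congr 1
      rw [Matrix.fromBlocks_transpose]
      simp [Matrix.fromBlocks_multiply, Matrix.mul_assoc]
    have hblocks : Matrix.fromBlocks (chiMat (P-2*n) R) 0 0
        (A2nᵀ * chiMat (2*n) R * A2n) =
        Matrix.reindex (blkE hka).symm (blkE hka).symm
          (((a : GL (Fin P) R) : Matrix (Fin P) (Fin P) R)ᵀ * chiMat P R *
            ((a : GL (Fin P) R) : Matrix (Fin P) (Fin P) R)) := by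
      rw [haco, d3a, reindex_cancel]
    -- assemble the equivalence W
    have hs1 : 2*n + 2*(1+T) = 2*(n+1+T) := by omega
    have hs2 : 2*1 + 2*(n+T) = 2*(n+1+T) := by omega
    have hc2 : (P - 2*n) + P = 2*(1+T) := by omega
    set sc₁ := Equiv.sumCongr (blkE hka).symm (Equiv.refl (Fin P)) with hsc₁
    set σ := (Equiv.sumCongr (Equiv.sumComm (Fin (P-2*n)) (Fin (2*n)))
      (Equiv.refl (Fin P))).trans
      (Equiv.sumAssoc (Fin (2*n)) (Fin (P-2*n)) (Fin P)) with hσ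
    set sc₂ := Equiv.sumCongr (Equiv.refl (Fin (2*n))) (blkE hc2) with hsc₂
    set W : Fin P ⊕ Fin P ≃ Fin (2*(n+1+T)) :=
      sc₁.trans (σ.trans (sc₂.trans (blkE hs1))) with hW
    -- LHS of the Witt relation
    have L1 : Matrix.fromBlocks (A2nᵀ * chiMat (2*n) R * A2n) 0 0 (chiMat (2*(1+T)) R) =
        Matrix.reindex sc₂ sc₂ (Matrix.fromBlocks (A2nᵀ * chiMat (2*n) R * A2n) 0 0
          (Matrix.fromBlocks (chiMat (P-2*n) R) 0 0 (chiMat P R))) := by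
      conv_lhs => rw [← chi_blocks hc2 (by omega)]
      rw [fromBlocks_reindex_right, hsc₂]
    have L2 : Matrix.fromBlocks (A2nᵀ * chiMat (2*n) R * A2n) 0 0
        (Matrix.fromBlocks (chiMat (P-2*n) R) 0 0 (chiMat P R)) =
        Matrix.reindex σ σ (Matrix.fromBlocks
          (Matrix.fromBlocks (chiMat (P-2*n) R) 0 0 (A2nᵀ * chiMat (2*n) R * A2n))
          0 0 (chiMat P R)) := by
      rw [hσ]
      exact (tri_shuffle _ _ _).symm
    have L3 : Matrix.fromBlocks
        (Matrix.fromBlocks (chiMat (P-2*n) R) 0 0 (A2nᵀ * chiMat (2*n) R * A2n))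
        0 0 (chiMat P R) = Matrix.reindex sc₁ sc₁ (Matrix.fromBlocks
          (((a : GL (Fin P) R) : Matrix (Fin P) (Fin P) R)ᵀ * chiMat P R *
            ((a : GL (Fin P) R) : Matrix (Fin P) (Fin P) R)) 0 0 (chiMat P R)) := by
      rw [hblocks, fromBlocks_reindex_left, hsc₁]
    have LHSW : Matrix.reindex (blkE hs1) (blkE hs1)
        (Matrix.fromBlocks (A2nᵀ * chiMat (2*n) R * A2n) 0 0 (chiMat (2*(1+T)) R)) =
        Matrix.reindex W W (Matrix.fromBlocks
          (((a : GL (Fin P) R) : Matrix (Fin P) (Fin P) R)ᵀ * chiMat P R *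
            ((a : GL (Fin P) R) : Matrix (Fin P) (Fin P) R)) 0 0 (chiMat P R)) := by
      rw [L1, L2, L3, reindex_reindex, reindex_reindex, reindex_reindex, hW]
    -- W carries χ ⊥ χ to χ
    have e0 : Matrix.reindex (blkE hka).symm (blkE hka).symm (chiMat P R) =
        Matrix.fromBlocks (chiMat (P-2*n) R) 0 0 (chiMat (2*n) R) := by
      conv_lhs => rw [← chi_blocks hka (by omega)]
      rw [reindex_cancel]
    have hWchi : Matrix.reindex W W
        (Matrix.fromBlocks (chiMat P R) 0 0 (chiMat P R)) = chiMat (2*(n+1+T)) R := by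
      rw [hW, ← reindex_reindex sc₁ (σ.trans (sc₂.trans (blkE hs1))),
        ← reindex_reindex σ (sc₂.trans (blkE hs1)), ← reindex_reindex sc₂ (blkE hs1)]
      have s1 : Matrix.reindex sc₁ sc₁
          (Matrix.fromBlocks (chiMat P R) 0 0 (chiMat P R)) =
          Matrix.fromBlocks (Matrix.fromBlocks (chiMat (P-2*n) R) 0 0 (chiMat (2*n) R))
            0 0 (chiMat P R) := by
        rw [hsc₁, ← fromBlocks_reindex_left, e0]
      rw [s1, hσ, tri_shuffle]
      have s3 : Matrix.reindex sc₂ sc₂ (Matrix.fromBlocks (chiMat (2*n) R) 0 0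
          (Matrix.fromBlocks (chiMat (P-2*n) R) 0 0 (chiMat P R))) =
          Matrix.fromBlocks (chiMat (2*n) R) 0 0 (chiMat (2*(1+T)) R) := by
        rw [hsc₂, ← fromBlocks_reindex_right, chi_blocks hc2 (by omega)]
      rw [s3]
      exact chi_blocks hs1 (by omega)
    -- conclude
    have main : Matrix.reindex (finCongr hs1) (finCongr hs1)
        (Paper.osum (A2nᵀ * chiMat (2*n) R * A2n) (chiMat (2*(1+T)) R)) =
        ((glMap W η : GL (Fin (2*(n+1+T))) R) :
            Matrix (Fin (2*(n+1+T))) (Fin (2*(n+1+T))) R)ᵀ *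
          (Matrix.reindex (finCongr hs2) (finCongr hs2)
            (Paper.osum (chiMat (2*1) R) (chiMat (2*(n+T)) R))) *
          ((glMap W η : GL (Fin (2*(n+1+T))) R) :
            Matrix (Fin (2*(n+1+T))) (Fin (2*(n+1+T))) R) := by
      rw [osum_eq hs1, osum_eq hs2, chi_blocks hs2 (by omega), glMap_coe, LHSW, KEY,
        reindex_mul, reindex_mul, ← reindex_transpose, hWchi]
    exact ⟨T, glMap W η, glMap_mem_Erel hηmem, main⟩
end
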